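/- arXiv:1509.06620 — 3 statements merged into one kernel-verified Lean document; each statement's English description precedes it below -/
import Mathlib

section
/- For any partition λ and any integer t ≥ 2, the t-core pre-tower terminates: there exists j such that every partition in α_j(t; λ) is empty. -/
open PowerSeries

/-- The type of all integer partitions (of any size). -/
abbrev Ptn : Type := Σ n : ℕ, Nat.Partition n

/-- Build a partition from an arbitrary multiset of naturals by discarding the zeros. -/
def ptnOfMultiset (m : Multiset ℕ) : Ptn :=
  ⟨(m.filter (fun x => 0 < x)).sum,
   ⟨m.filter (fun x => 0 < x), fun hi => (Multiset.mem_filter.mp hi).2, rfl⟩⟩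

/-- The `i`-th largest part of a partition (0-indexed), or `0` if there is none. -/
def partAt (p : Ptn) (i : ℕ) : ℕ := ((p.2.parts.sort (· ≤ ·)).reverse).getD i 0

/-- The beta-set (set of first-column hook lengths) of `p`, computed with `K` beads:
`{λ_i + (K - 1 - i) : 0 ≤ i < K}`. -/
def betaSet (p : Ptn) (K : ℕ) : Finset ℕ :=
  (Finset.range K).image (fun i => partAt p i + (K - 1 - i))

/-- The partition whose beta-set (for `S.card` beads) is the finite set `S`. -/
def ptnOfBetaSet (S : Finset ℕ) : Ptn :=
  ptnOfMultiset (((S.sort (· ≤ ·)).mapIdx (fun i b => b - i) : List ℕ) : Multiset ℕ)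

/-- A normalized number of beads for the `t`-abacus of `p`: divisible by `t` and
at least the number of parts, which makes the `t`-quotient labelling canonical. -/
def beads (t : ℕ) (p : Ptn) : ℕ := t * p.2.parts.card

/-- The `t`-core of a partition, via the abacus: push all beads down their runners. -/
def core (t : ℕ) (p : Ptn) : Ptn :=
  ptnOfBetaSet ((Finset.range t).biUnion (fun r =>
    (Finset.range (((betaSet p (beads t p)).filter (fun b => b % t = r)).card)).image
      (fun j => r + t * j)))

/-- The `t`-quotient of a partition, via the abacus: the `r`-th component is read off
from the beads on runner `r`. -/
def quotient (t : ℕ) (p : Ptn) : List Ptn :=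
  (List.range t).map (fun r =>
    ptnOfBetaSet (((betaSet p (beads t p)).filter (fun b => b % t = r)).image (fun b => b / t)))

/-- Row `j` of the `t`-core pre-tower of `p`: `α_0 = [p]`, and `α_{j+1}` is obtained by
concatenating the `t`-quotients of the partitions in `α_j`. -/
def preTower (t : ℕ) (p : Ptn) : ℕ → List Ptn
  | 0 => [p]
  | j + 1 => (preTower t p j).flatMap (quotient t)

/-- Row `j` of the `t`-core tower of `p`: the `t`-cores of the partitions in `α_j`. -/
def towerRow (t : ℕ) (p : Ptn) (j : ℕ) : List Ptn := (preTower t p j).map (core t)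

/-- The total size of a row: the sum of the sizes of its partitions. -/
def rowSize (l : List Ptn) : ℕ := (l.map (fun q => q.1)).sum

/-- The formal power series `(q^m; q^m)_∞ ^ s`, defined coefficientwise (the `n`-th
coefficient of the infinite product agrees with that of the finite product
`∏_{k=1}^n (1 - q^{mk})^s`). -/
noncomputable def eulerProd (m s : ℕ) : PowerSeries ℚ :=
  PowerSeries.mk fun n =>
    PowerSeries.coeff (R := ℚ) n (∏ k ∈ Finset.Icc 1 n, (1 - PowerSeries.X ^ (m * k)) ^ s)

/-- The series `G(q^m) = ∑_{k ≥ 1} σ_1(k) q^{mk}`. -/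
noncomputable def Gm (m : ℕ) : PowerSeries ℚ :=
  PowerSeries.mk fun n => if m ∣ n ∧ n ≠ 0 then (∑ d ∈ (n / m).divisors, (d : ℚ)) else 0
/-- The number of cells in column `j` (0-indexed) of the Young diagram of `p`. -/
def colLen (p : Ptn) (j : ℕ) : ℕ := Multiset.countP (fun a => j < a) p.2.parts

/-- The hook length of the cell in row `i`, column `j` (0-indexed) of `p`:
arm length + leg length + 1. -/
def hookLength (p : Ptn) (i j : ℕ) : ℕ := (partAt p i - j) + (colLen p j - (i + 1))

/-- A partition is a `t`-core if no hook length of a cell of its Young diagram is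
divisible by `t`. -/
def IsTCore (t : ℕ) (p : Ptn) : Prop :=
  ∀ i j : ℕ, j < partAt p i → ¬ t ∣ hookLength p i j

/-- A partition is a generalized `(j,t)`-core if every partition in row `j+1` of its
`t`-core pre-tower is empty. -/
def IsGenCore (t j : ℕ) (p : Ptn) : Prop :=
  ∀ q ∈ preTower t p (j + 1), q.1 = 0

/-- `T_{j,t}(q) = ∑_{λ ∈ P} |β_j(t;λ)| q^{|λ|}`. -/
noncomputable def Tgen (t j : ℕ) : PowerSeries ℚ :=
  PowerSeries.mk fun n => ∑ p : Nat.Partition n, (rowSize (towerRow t ⟨n, p⟩ j) : ℚ)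

/-- The number of partitions of `n`. -/
noncomputable def pfun (n : ℕ) : ℕ := Nat.card (Nat.Partition n)

/-- `a_t(n)`: the sum of the sizes of the `t`-cores of all partitions of `n`. -/
noncomputable def acore (t n : ℕ) : ℕ := ∑ p : Nat.Partition n, (core t ⟨n, p⟩).1

/-- The number of `t`-regular partitions of `n` (no part divisible by `t`). -/
noncomputable def preg (t n : ℕ) : ℕ :=
  Nat.card {p : Nat.Partition n // ∀ x ∈ p.parts, ¬ t ∣ x}

-- sum of getD over range of length = list sum
lemma sum_getD (l : List ℕ) : ∑ i ∈ Finset.range l.length, l.getD i 0 = l.sum := by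
  induction l with
  | nil => simp
  | cons x l ih =>
    rw [List.length_cons, Finset.sum_range_succ']
    simp only [List.getD_cons_succ, List.getD_cons_zero, List.sum_cons, ih]
    omega

-- sum of getD over larger range
lemma sum_getD' (l : List ℕ) (K : ℕ) (hK : l.length ≤ K) :
    ∑ i ∈ Finset.range K, l.getD i 0 = l.sum := by
  rw [← sum_getD l]
  symm
  apply Finset.sum_subset
  · exact Finset.range_subset_range.mpr hK
  · intro i _ hi
    simp only [Finset.mem_range, not_lt] at hi
    exact List.getD_eq_default _ _ hi

-- sorted nodup list of naturals: i ≤ l[i]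
lemma sorted_getD_ge (l : List ℕ) (hs : l.Pairwise (· < ·)) (i : ℕ) (hi : i < l.length) :
    i ≤ l.getD i 0 := by
  induction i with
  | zero => exact Nat.zero_le _
  | succ n ih =>
    have hn : n < l.length := Nat.lt_of_succ_lt hi
    have h1 := ih hn
    have h2 : l.get ⟨n, hn⟩ < l.get ⟨n+1, hi⟩ :=
      List.pairwise_iff_get.mp hs ⟨n, hn⟩ ⟨n+1, hi⟩ (by simp)
    rw [List.getD_eq_getElem _ _ hn] at h1
    rw [List.getD_eq_getElem _ _ hi]
    simp only [List.get_eq_getElem] at h2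
    omega

lemma mapIdx_sum (l : List ℕ) (f : ℕ → ℕ → ℕ) :
    (l.mapIdx f).sum = ∑ i ∈ Finset.range l.length, f i (l.getD i 0) := by
  induction l generalizing f with
  | nil => simp
  | cons x l ih =>
    rw [List.mapIdx_cons, List.sum_cons, List.length_cons, Finset.sum_range_succ', ih]
    simp [Nat.add_comm]

lemma ptnOfMultiset_fst (m : Multiset ℕ) : (ptnOfMultiset m).1 = m.sum := by
  show (m.filter _).sum = m.sum
  rw [← Multiset.sum_filter_add_sum_filter_not (fun x => 0 < x) (s := m)]
  have : (Multiset.filter (fun a => ¬ 0 < a) m).sum = 0 := by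
    apply Multiset.sum_eq_zero
    intro x hx
    have := Multiset.mem_filter.mp hx
    omega
  omega

lemma sort_sum (S : Finset ℕ) : (S.sort (· ≤ ·)).sum = ∑ b ∈ S, b := by
  rw [← Multiset.sum_coe, Finset.sort_eq]
  rw [Finset.sum, Multiset.map_id']

lemma ptnOfBetaSet_fst (S : Finset ℕ) :
    (ptnOfBetaSet S).1 + ∑ i ∈ Finset.range S.card, i = ∑ b ∈ S, b := by
  unfold ptnOfBetaSet
  rw [ptnOfMultiset_fst, Multiset.sum_coe, mapIdx_sum]
  have hlen : (S.sort (· ≤ ·)).length = S.card := Finset.length_sort _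
  have hsorted : (S.sort (· ≤ ·)).Pairwise (· < ·) :=
    ((Finset.pairwise_sort _ _).and (Finset.sort_nodup _ _)).imp (fun h => lt_of_le_of_ne h.1 h.2)
  rw [← hlen, ← Finset.sum_add_distrib, ← sort_sum S, ← sum_getD]
  apply Finset.sum_congr rfl
  intro i hi
  have := sorted_getD_ge _ hsorted i (Finset.mem_range.mp hi)
  omega

-- any finset of naturals has sum at least 0+1+...+(card-1)
lemma staircase_le_sum (S : Finset ℕ) : ∑ i ∈ Finset.range S.card, i ≤ ∑ b ∈ S, b := by
  have hlen : (S.sort (· ≤ ·)).length = S.card := Finset.length_sort _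
  have hsorted : (S.sort (· ≤ ·)).Pairwise (· < ·) :=
    ((Finset.pairwise_sort _ _).and (Finset.sort_nodup _ _)).imp (fun h => lt_of_le_of_ne h.1 h.2)
  rw [← sort_sum S, ← sum_getD' _ S.card (le_of_eq hlen)]
  apply Finset.sum_le_sum
  intro i hi
  exact sorted_getD_ge _ hsorted i (by rw [hlen]; exact Finset.mem_range.mp hi)

lemma partAt_sum (p : Ptn) (K : ℕ) (hK : p.2.parts.card ≤ K) :
    ∑ i ∈ Finset.range K, partAt p i = p.1 := by
  unfold partAt
  rw [sum_getD' _ K (by simpa using hK), List.sum_reverse, ← Multiset.sum_coe,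
    Multiset.sort_eq, p.2.parts_sum]

lemma partAt_anti (p : Ptn) {i j : ℕ} (hij : i ≤ j) : partAt p j ≤ partAt p i := by
  unfold partAt
  set l := (Multiset.sort p.2.parts (· ≤ ·)).reverse with hl
  rcases Nat.lt_or_ge j l.length with hj | hj
  · have hi : i < l.length := lt_of_le_of_lt hij hj
    rcases Nat.eq_or_lt_of_le hij with rfl | hij'
    · exact le_refl _
    · have hp : l.Pairwise (· ≥ ·) := by
        rw [hl, List.pairwise_reverse]
        exact Multiset.pairwise_sort _ (· ≤ ·)
      have := List.pairwise_iff_get.mp hp ⟨i, hi⟩ ⟨j, hj⟩ hij'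
      rw [List.getD_eq_getElem _ _ hi, List.getD_eq_getElem _ _ hj]
      simpa using this
  · rw [List.getD_eq_default _ _ hj]
    exact Nat.zero_le _

lemma betaMap_injOn (p : Ptn) (K : ℕ) :
    Set.InjOn (fun i => partAt p i + (K - 1 - i)) (Finset.range K) := by
  have key : ∀ i j : ℕ, i < j → j < K →
      (fun i => partAt p i + (K - 1 - i)) j < (fun i => partAt p i + (K - 1 - i)) i := by
    intro i j hij hj
    have h1 := partAt_anti p (le_of_lt hij)
    simp only
    omega
  intro i hi j hj hij
  simp only [Finset.coe_insert, Set.mem_insert_iff, Finset.mem_coe, Finset.mem_range] at hi hj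
  rcases Nat.lt_trichotomy i j with h | h | h
  · exact absurd hij (Nat.ne_of_lt' (key i j h hj))
  · exact h
  · exact absurd hij (Nat.ne_of_lt (key j i h hi))

lemma betaSet_card (p : Ptn) (K : ℕ) : (betaSet p K).card = K := by
  rw [betaSet, Finset.card_image_of_injOn (betaMap_injOn p K), Finset.card_range]

lemma betaSet_sum (p : Ptn) (K : ℕ) (hK : p.2.parts.card ≤ K) :
    ∑ b ∈ betaSet p K, b = p.1 + ∑ i ∈ Finset.range K, i := by
  rw [betaSet, Finset.sum_image (betaMap_injOn p K), Finset.sum_add_distrib,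
    partAt_sum p K hK]
  congr 1
  rw [← Finset.sum_range_reflect]
  apply Finset.sum_congr rfl
  intro i hi
  have := Finset.mem_range.mp hi
  omega

lemma quotient_size (t : ℕ) (ht : 0 < t) (p : Ptn) :
    t * ∑ r ∈ Finset.range t, (ptnOfBetaSet
      (((betaSet p (beads t p)).filter (fun b => b % t = r)).image (fun b => b / t))).1
    ≤ p.1 := by
  set K := beads t p with hKdef
  set S := betaSet p K with hSdef
  set F : ℕ → Finset ℕ := fun r => S.filter (fun b => b % t = r) with hFdef
  set c : ℕ → ℕ := fun r => (F r).card with hcdef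
  have hKcard : p.2.parts.card ≤ K := by
    rw [hKdef]; unfold beads; exact Nat.le_mul_of_pos_left _ ht
  have hScard : S.card = K := betaSet_card p K
  have hSsum : ∑ b ∈ S, b = p.1 + ∑ i ∈ Finset.range K, i := betaSet_sum p K hKcard
  -- division image injectivity
  have hinj : ∀ r, Set.InjOn (fun b => b / t) (F r) := by
    intro r b hb b' hb' h
    have h1 : b % t = r := (Finset.mem_filter.mp hb).2
    have h2 : b' % t = r := (Finset.mem_filter.mp hb').2
    simp only at h
    rw [← Nat.div_add_mod b t, ← Nat.div_add_mod b' t, h, h1, h2]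
  -- per-component size formula
  have hcomp : ∀ r, t * (ptnOfBetaSet ((F r).image (fun b => b / t))).1
      + (t * ∑ i ∈ Finset.range (c r), i + r * c r) = ∑ b ∈ F r, b := by
    intro r
    have hcard : ((F r).image (fun b => b / t)).card = c r :=
      Finset.card_image_of_injOn (hinj r)
    have hfst := ptnOfBetaSet_fst ((F r).image (fun b => b / t))
    rw [hcard, Finset.sum_image (hinj r)] at hfst
    have hsplit : ∀ b ∈ F r, t * (b / t) + r = b := by
      intro b hb
      have h1 : b % t = r := (Finset.mem_filter.mp hb).2
      have := Nat.div_add_mod b t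
      omega
    calc t * (ptnOfBetaSet ((F r).image (fun b => b / t))).1
        + (t * ∑ i ∈ Finset.range (c r), i + r * c r)
        = t * ((ptnOfBetaSet ((F r).image (fun b => b / t))).1
            + ∑ i ∈ Finset.range (c r), i) + r * c r := by ring
      _ = t * ∑ b ∈ F r, b / t + r * c r := by rw [hfst]
      _ = ∑ b ∈ F r, (t * (b / t) + r) := by
            simp only [Finset.sum_add_distrib, Finset.mul_sum, Finset.sum_const,
              smul_eq_mul, hcdef]
            ring
      _ = ∑ b ∈ F r, b := Finset.sum_congr rfl hsplit
  -- fiberwise decomposition of S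
  have hmaps : ∀ b ∈ S, b % t ∈ Finset.range t := fun b _ =>
    Finset.mem_range.mpr (Nat.mod_lt b ht)
  have hfibsum : ∑ r ∈ Finset.range t, ∑ b ∈ F r, b = ∑ b ∈ S, b :=
    Finset.sum_fiberwise_of_maps_to hmaps _
  have hfibcard : ∑ r ∈ Finset.range t, c r = K := by
    rw [← hScard]; exact (Finset.card_eq_sum_card_fiberwise hmaps).symm
  -- staircase set
  set T : Finset ℕ := (Finset.range t).biUnion
    (fun r => (Finset.range (c r)).image (fun j => r + t * j)) with hTdef
  have hTinj : ∀ r, Set.InjOn (fun j => r + t * j) (Finset.range (c r)) := by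
    intro r j hj j' hj' h
    simp only at h
    exact Nat.eq_of_mul_eq_mul_left ht (by omega)
  have hTdisj : ∀ r ∈ Finset.range t, ∀ r' ∈ Finset.range t, r ≠ r' →
      Disjoint ((Finset.range (c r)).image (fun j => r + t * j))
        ((Finset.range (c r')).image (fun j => r' + t * j)) := by
    intro r hr r' hr' hne
    rw [Finset.disjoint_left]
    intro x hx hx'
    obtain ⟨j, _, rfl⟩ := Finset.mem_image.mp hx
    obtain ⟨j', _, he⟩ := Finset.mem_image.mp hx'
    have h1 : (r + t * j) % t = r := by
      rw [Nat.add_mul_mod_self_left]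
      exact Nat.mod_eq_of_lt (Finset.mem_range.mp hr)
    have h2 : (r' + t * j') % t = r' := by
      rw [Nat.add_mul_mod_self_left]
      exact Nat.mod_eq_of_lt (Finset.mem_range.mp hr')
    rw [he] at h2
    exact hne (h1.symm.trans h2)
  have hTcard : T.card = K := by
    rw [hTdef, Finset.card_biUnion hTdisj]
    rw [← hfibcard]
    apply Finset.sum_congr rfl
    intro r _
    rw [Finset.card_image_of_injOn (hTinj r), Finset.card_range]
  have hTsum : ∑ b ∈ T, b = ∑ r ∈ Finset.range t,
      (t * ∑ i ∈ Finset.range (c r), i + r * c r) := by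
    rw [hTdef, Finset.sum_biUnion hTdisj]
    apply Finset.sum_congr rfl
    intro r _
    rw [Finset.sum_image (hTinj r)]
    simp only [Finset.sum_add_distrib, Finset.sum_const, smul_eq_mul, Finset.card_range,
      ← Finset.mul_sum, hcdef]
    rw [Finset.mul_sum]
    ring
  have hstair : ∑ i ∈ Finset.range K, i ≤ ∑ b ∈ T, b := by
    have := staircase_le_sum T
    rwa [hTcard] at this
  -- combine
  have hmain : t * ∑ r ∈ Finset.range t, (ptnOfBetaSet ((F r).image (fun b => b / t))).1
      + ∑ b ∈ T, b = p.1 + ∑ i ∈ Finset.range K, i := by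
    rw [hTsum, Finset.mul_sum, ← Finset.sum_add_distrib]
    rw [Finset.sum_congr rfl (fun r _ => hcomp r), hfibsum, hSsum]
  show t * ∑ r ∈ Finset.range t, (ptnOfBetaSet (Finset.image (fun b => b / t) (F r))).1 ≤ p.1
  omega

lemma quotient_mem_size {t : ℕ} (ht : 0 < t) (p : Ptn) {q : Ptn} (hq : q ∈ quotient t p) :
    t * q.1 ≤ p.1 := by
  rw [quotient, List.mem_map] at hq
  obtain ⟨r, hr, rfl⟩ := hq
  rw [List.mem_range] at hr
  have h1 : (ptnOfBetaSet (((betaSet p (beads t p)).filter (fun b => b % t = r)).image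
      (fun b => b / t))).1 ≤ ∑ r' ∈ Finset.range t, (ptnOfBetaSet
      (((betaSet p (beads t p)).filter (fun b => b % t = r')).image (fun b => b / t))).1 :=
    Finset.single_le_sum (f := fun r' => (ptnOfBetaSet
        (((betaSet p (beads t p)).filter (fun b => b % t = r')).image (fun b => b / t))).1)
      (fun _ _ => Nat.zero_le _) (Finset.mem_range.mpr hr)
  have h2 := quotient_size t ht p
  calc t * _ ≤ t * ∑ r' ∈ Finset.range t, (ptnOfBetaSet
        (((betaSet p (beads t p)).filter (fun b => b % t = r')).image (fun b => b / t))).1 :=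
        Nat.mul_le_mul_left t h1
    _ ≤ p.1 := h2

lemma preTower_comm (t : ℕ) (p : Ptn) (k : ℕ) (q : Ptn) :
    q ∈ preTower t p (k + 1) ↔ ∃ r ∈ quotient t p, q ∈ preTower t r k := by
  induction k generalizing q with
  | zero =>
    simp [preTower]
  | succ k ih =>
    show q ∈ (preTower t p (k+1)).flatMap (quotient t) ↔ _
    rw [List.mem_flatMap]
    constructor
    · rintro ⟨s, hs, hq⟩
      obtain ⟨r, hr, hs'⟩ := (ih s).mp hs
      exact ⟨r, hr, List.mem_flatMap.mpr ⟨s, hs', hq⟩⟩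
    · rintro ⟨r, hr, hq⟩
      obtain ⟨s, hs, hq'⟩ := List.mem_flatMap.mp hq
      exact ⟨s, (ih s).mpr ⟨r, hr, hs⟩, hq'⟩

lemma preTower_stable {t : ℕ} (ht : 0 < t) (p : Ptn) (j : ℕ)
    (h : ∀ q ∈ preTower t p j, q.1 = 0) : ∀ q ∈ preTower t p (j + 1), q.1 = 0 := by
  intro q hq
  rw [show j + 1 = j.succ from rfl] at hq
  obtain ⟨s, hs, hq'⟩ := List.mem_flatMap.mp hq
  have hs0 := h s hs
  have h2 := quotient_mem_size ht s hq'
  rw [hs0, Nat.le_zero, Nat.mul_eq_zero] at h2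
  omega

/-- the `t`-core pre-tower terminates. -/
theorem pretower_terminates (t : ℕ) (ht : 2 ≤ t) (p : Ptn) :
    ∃ j : ℕ, ∀ q ∈ preTower t p j, q.1 = 0 := by
  have ht0 : 0 < t := by omega
  obtain ⟨n, hn⟩ : ∃ n, p.1 = n := ⟨p.1, rfl⟩
  induction n using Nat.strong_induction_on generalizing p with
  | _ n ih =>
  rcases Nat.eq_zero_or_pos n with rfl | hpos
  · exact ⟨0, by simpa [preTower] using hn⟩
  · -- every quotient component is strictly smaller
    have hlt : ∀ r ∈ quotient t p, r.1 < n := by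
      intro r hr
      have h1 := quotient_mem_size ht0 p hr
      have h2 : 2 * r.1 ≤ t * r.1 := Nat.mul_le_mul_right _ ht
      omega
    -- choose a uniform bound
    have hex : ∀ r ∈ quotient t p, ∃ j, ∀ q ∈ preTower t r j, q.1 = 0 := by
      intro r hr
      exact ih r.1 (hn ▸ hlt r hr) r rfl
    choose! f hf using hex
    set J := ((quotient t p).map f).foldr max 0 with hJ
    have hfJ : ∀ r ∈ quotient t p, f r ≤ J := by
      intro r hr
      have : f r ∈ (quotient t p).map f := List.mem_map.mpr ⟨r, hr, rfl⟩
      exact List.le_max_of_le (by simpa [hJ] using this) (le_refl _)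
    have hup : ∀ r ∈ quotient t p, ∀ j, f r ≤ j → ∀ q ∈ preTower t r j, q.1 = 0 := by
      intro r hr j hj
      induction j with
      | zero =>
        have : f r = 0 := Nat.le_zero.mp hj
        exact this ▸ hf r hr
      | succ j ihj =>
        rcases Nat.lt_or_ge j (f r) with h | h
        · have : f r = j + 1 := by omega
          exact this ▸ hf r hr
        · exact preTower_stable ht0 r j (ihj h)
    refine ⟨J + 1, fun q hq => ?_⟩
    obtain ⟨r, hr, hq'⟩ := (preTower_comm t p J q).mp hq
    exact hup r hr J (hfJ r hr) q hq'
end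

section
/- For any integer t ≥ 2, every partition λ is equivalent under ∼_j to a unique generalized (j,t)-core, where λ ∼_j μ means β_k(t;λ) = β_k(t;μ) for all 0 ≤ k ≤ j. -/
open PowerSeries

namespace Aux

lemma ptn_ext (p q : Ptn) (h1 : p.1 = q.1) (h2 : p.2.parts = q.2.parts) : p = q := by
  obtain ⟨n, P⟩ := p; obtain ⟨m, Q⟩ := q
  cases h1; cases Nat.Partition.ext h2; rfl

def emptyPtn : Ptn := ⟨0, ⟨0, by simp, by simp⟩⟩

lemma eq_empty (q : Ptn) (h : q.1 = 0) : q = emptyPtn := by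
  apply ptn_ext _ _ h
  obtain ⟨n, P⟩ := q
  simp only at h; subst h
  have := P.parts_sum
  have : ∀ x ∈ P.parts, x = 0 := by
    intro x hx
    by_contra hne
    have hpos := P.parts_pos hx
    have : 0 < P.parts.sum := by
      calc 0 < x := hpos
      _ ≤ P.parts.sum := Multiset.le_sum_of_mem hx  -- name?
    omega
  have : P.parts = 0 := Multiset.eq_zero_of_forall_notMem (fun x hx => by
    have := P.parts_pos hx; have := ‹∀ x ∈ P.parts, x = 0› x hx; omega)
  simp [this, emptyPtn]

-- sorted desc list view
lemma partAt_antitone (p : Ptn) {i j : ℕ} (h : i ≤ j) : partAt p j ≤ partAt p i := by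
  unfold partAt
  set l := (p.2.parts.sort (· ≤ ·)).reverse with hl
  have hs : l.Pairwise (· ≥ ·) := by
    rw [hl, List.pairwise_reverse]
    exact (p.2.parts.pairwise_sort (· ≤ ·)).imp (fun h => h)
  by_cases hj : j < l.length
  · have hi : i < l.length := lt_of_le_of_lt h hj
    rw [List.getD_eq_getElem _ _ hj, List.getD_eq_getElem _ _ hi]
    rcases Nat.lt_or_ge i j with hij | hij
    · exact List.pairwise_iff_getElem.mp hs i j hi hj hij
    · have : i = j := le_antisymm h hij
      subst this; rfl
  · rw [List.getD_eq_default _ _ (le_of_not_gt hj)]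
    exact Nat.zero_le _

lemma partAt_eq_zero (p : Ptn) {i : ℕ} (h : Multiset.card p.2.parts ≤ i) : partAt p i = 0 := by
  unfold partAt
  apply List.getD_eq_default
  simpa using h

end Aux

namespace Aux

/-- If `l` is strictly sorted and has the same elements as `S`, then `S.sort = l`. -/
lemma sort_eq_of_sorted_lt {l : List ℕ} {S : Finset ℕ}
    (hs : l.Pairwise (· < ·)) (h : ∀ x, x ∈ l ↔ x ∈ S) : S.sort (· ≤ ·) = l := by
  apply List.Perm.eq_of_pairwise' (S.pairwise_sort _) (hs.imp le_of_lt)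
  apply List.perm_of_nodup_nodup_toFinset_eq (S.sort_nodup _) hs.nodup
  ext x
  simp [h x]

/-- sort of a multiset coming from a `≥`-sorted list is its reverse -/
lemma msort_of_sorted_ge {l : List ℕ} (hs : l.Pairwise (· ≥ ·)) :
    Multiset.sort (↑l : Multiset ℕ) (· ≤ ·) = l.reverse := by
  have hperm : (Multiset.sort (↑l : Multiset ℕ) (· ≤ ·)).Perm l.reverse := by
    have h1 : (Multiset.sort (↑l : Multiset ℕ) (· ≤ ·) : Multiset ℕ) = ↑l :=
      Multiset.sort_eq _ _
    have h2 : (↑l.reverse : Multiset ℕ) = ↑l := Multiset.coe_reverse l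
    exact Quotient.exact (h1.trans h2.symm)
  have hrev : l.reverse.Pairwise (· ≤ ·) :=
    (List.pairwise_reverse).mpr (hs.imp fun h => h)
  exact List.Perm.eq_of_pairwise' (Multiset.pairwise_sort _ _) hrev hperm

end Aux

namespace Aux

lemma filter_eq_takeWhile {l : List ℕ} (hs : l.Pairwise (· ≥ ·)) :
    l.filter (fun x => 0 < x) = l.takeWhile (fun x => 0 < x) := by
  induction l with
  | nil => rfl
  | cons a l ih =>
    rcases List.pairwise_cons.mp hs with ⟨ha, hl⟩
    by_cases h : 0 < a
    · simp [List.filter_cons, List.takeWhile_cons, h, ih hl]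
    · have : l.filter (fun x => 0 < x) = [] := by
        rw [List.filter_eq_nil_iff]
        intro x hx
        have := ha x hx
        simp only [decide_eq_true_eq]
        omega
      simp [List.filter_cons, List.takeWhile_cons, h, this]

lemma partAt_ptnOfMultiset (K : ℕ) (a : ℕ → ℕ)
    (ha : ∀ i j : ℕ, i ≤ j → j < K → a j ≤ a i) :
    (∀ i, i < K → partAt (ptnOfMultiset ↑((List.range K).map a)) i = a i) ∧
    Multiset.card (ptnOfMultiset ↑((List.range K).map a)).2.parts ≤ K := by
  set L : List ℕ := (List.range K).map a with hLdef
  have hLlen : L.length = K := by simp [hLdef]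
  have hLget : ∀ i (h : i < K), L[i]'(by omega) = a i := by
    intro i h; simp [hLdef]
  have hLpw : L.Pairwise (· ≥ ·) := by
    rw [List.pairwise_iff_getElem]
    intro i j hi hj hij
    rw [hLget i (by omega), hLget j (by omega)]
    exact ha i j (le_of_lt hij) (by omega)
  set F : List ℕ := L.filter (fun x => 0 < x) with hFdef
  have hFpw : F.Pairwise (· ≥ ·) := hLpw.sublist List.filter_sublist
  have hparts : (ptnOfMultiset ↑L).2.parts = (↑F : Multiset ℕ) := by
    show Multiset.filter (fun x => 0 < x) ↑L = _
    rw [Multiset.filter_coe]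
  have hcard : Multiset.card (ptnOfMultiset ↑L).2.parts = F.length := by
    rw [hparts]; simp
  have hFK : F.length ≤ K := by
    rw [← hLlen]; exact List.length_filter_le _ _
  have hpre : F <+: L := by
    rw [hFdef, filter_eq_takeWhile hLpw]
    exact List.takeWhile_prefix _
  have hzero : ∀ i, F.length ≤ i → i < K → a i = 0 := by
    intro i hci hiK
    by_contra hne
    have hpos : 0 < a i := by omega
    have htake : L.take (i+1) = (List.range (i+1)).map a := by
      rw [hLdef, ← List.map_take, List.take_range, Nat.min_eq_left (by omega)]
    have hcount : List.countP (fun x => 0 < x) (L.take (i+1)) = i + 1 := by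
      rw [htake]
      rw [List.countP_eq_length.mpr]
      · simp
      · intro x hx
        simp only [List.mem_map, List.mem_range] at hx
        obtain ⟨j, hj, rfl⟩ := hx
        have := ha j i (by omega) hiK
        simp only [decide_eq_true_eq]
        omega
    have : F.length = List.countP (fun x => 0 < x) L := by
      rw [hFdef]
      exact List.countP_eq_length_filter.symm
    have hsplit : List.countP (fun x => 0 < x) L
        = List.countP (fun x => 0 < x) (L.take (i+1)) + List.countP (fun x => 0 < x) (L.drop (i+1)) := by
      rw [← List.countP_append, List.take_append_drop]
    omega
  have hAt : ∀ i, partAt (ptnOfMultiset ↑L) i = F.getD i 0 := by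
    intro i
    unfold partAt
    rw [hparts, msort_of_sorted_ge hFpw, List.reverse_reverse]
  constructor
  · intro i hiK
    rw [hAt i]
    by_cases hic : i < F.length
    · rw [List.getD_eq_getElem _ _ hic, hpre.getElem hic, hLget i hiK]
    · rw [List.getD_eq_default _ _ (by omega), hzero i (by omega) hiK]
  · omega

end Aux

namespace Aux

lemma ptnOfMultiset_eq_self (p : Ptn) (m : Multiset ℕ)
    (h : m.filter (fun x => 0 < x) = p.2.parts) : ptnOfMultiset m = p := by
  apply ptn_ext
  · show (m.filter (fun x => 0 < x)).sum = p.1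
    rw [h, p.2.parts_sum]
  · exact h

lemma range_rev_perm (K : ℕ) : ((List.range K).map (fun i => K-1-i)).Perm (List.range K) := by
  apply List.perm_of_nodup_nodup_toFinset_eq
  · refine List.Nodup.map_on ?_ List.nodup_range
    intro i hi j hj h
    simp only [List.mem_range] at hi hj
    omega
  · exact List.nodup_range
  · ext x
    simp only [List.mem_toFinset, List.mem_map, List.mem_range]
    constructor
    · rintro ⟨i, hi, rfl⟩; omega
    · intro hx
      exact ⟨K-1-x, by omega, by omega⟩

lemma map_rev_perm (K : ℕ) (f : ℕ → ℕ) :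
    ((List.range K).map (fun i => f (K-1-i))).Perm ((List.range K).map f) := by
  have h := (range_rev_perm K).map f
  rwa [List.map_map] at h

lemma sort_betaSet (p : Ptn) (K : ℕ) :
    (betaSet p K).sort (· ≤ ·) = (List.range K).map (fun i => partAt p (K-1-i) + i) := by
  apply sort_eq_of_sorted_lt
  · rw [List.pairwise_iff_getElem]
    intro i j hi hj hij
    simp only [List.length_map, List.length_range] at hi hj
    simp only [List.getElem_map, List.getElem_range]
    have h1 : partAt p (K-1-i) ≤ partAt p (K-1-j) := partAt_antitone p (by omega)
    omega
  · intro x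
    simp only [List.mem_map, List.mem_range, betaSet, Finset.mem_image, Finset.mem_range]
    constructor
    · rintro ⟨i, hi, rfl⟩
      exact ⟨K-1-i, by omega, by rw [show K-1-(K-1-i) = i by omega]⟩
    · rintro ⟨i, hi, rfl⟩
      exact ⟨K-1-i, by omega, by rw [show K-1-(K-1-i) = i by omega]⟩

lemma ptnOfBetaSet_betaSet (p : Ptn) (K : ℕ) (hK : Multiset.card p.2.parts ≤ K) :
    ptnOfBetaSet (betaSet p K) = p := by
  unfold ptnOfBetaSet
  rw [sort_betaSet p K]
  have hmi : (((List.range K).map (fun i => partAt p (K-1-i) + i)).mapIdx (fun i b => b - i))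
      = (List.range K).map (fun i => partAt p (K-1-i)) := by
    apply List.ext_getElem (by simp)
    intro n h1 h2
    rw [List.getElem_mapIdx]
    simp
  rw [hmi]
  apply ptnOfMultiset_eq_self
  have hperm : (↑((List.range K).map (fun i => partAt p (K-1-i))) : Multiset ℕ)
      = ↑((List.range K).map (partAt p)) := by
    rw [Multiset.coe_eq_coe]
    exact map_rev_perm K (partAt p)
  rw [hperm]
  -- now show filter pos of the padded list is parts
  set D : List ℕ := (p.2.parts.sort (· ≤ ·)).reverse with hD
  have hDlen : D.length = Multiset.card p.2.parts := by simp [hD]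
  have hDcoe : (↑D : Multiset ℕ) = p.2.parts := by
    rw [hD, Multiset.coe_reverse, Multiset.sort_eq]
  have hlist : (List.range K).map (partAt p) = D ++ List.replicate (K - D.length) 0 := by
    apply List.ext_getElem (by simp; omega)
    intro n h1 h2
    simp only [List.getElem_map, List.getElem_range]
    by_cases hn : n < D.length
    · rw [List.getElem_append_left hn]
      show D.getD n 0 = _
      rw [List.getD_eq_getElem _ _ hn]
    · rw [List.getElem_append_right (by omega)]
      simp only [List.getElem_replicate]
      exact partAt_eq_zero p (by omega)
  rw [hlist]
  have hco : ((D ++ List.replicate (K - D.length) 0 : List ℕ) : Multiset ℕ)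
      = (↑D : Multiset ℕ) + Multiset.replicate (K - D.length) 0 := by
    rw [← Multiset.coe_add, ← Multiset.coe_replicate]
  rw [hco, Multiset.filter_add]
  have h1 : Multiset.filter (fun x => 0 < x) (↑D : Multiset ℕ) = ↑D := by
    rw [Multiset.filter_eq_self]
    intro x hx
    rw [hDcoe] at hx
    exact p.2.parts_pos hx
  have h2 : Multiset.filter (fun x => 0 < x) (Multiset.replicate (K - D.length) 0) = 0 := by
    rw [Multiset.filter_eq_nil]
    intro x hx
    rw [Multiset.eq_of_mem_replicate hx]
    omega
  rw [h1, h2, add_zero, hDcoe]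

end Aux

namespace Aux

lemma sorted_lt_le_getElem {l : List ℕ} (hs : l.Pairwise (· < ·)) :
    ∀ i (h : i < l.length), i ≤ l[i] := by
  intro i
  induction i with
  | zero => intro h; omega
  | succ n ih =>
    intro h
    have h1 : l[n]'(by omega) < l[n+1] :=
      List.pairwise_iff_getElem.mp hs n (n+1) (by omega) h (by omega)
    have := ih (by omega)
    omega

lemma sorted_lt_getElem_le {l : List ℕ} (hs : l.Pairwise (· < ·)) :
    ∀ d i (h : i + d < l.length), l[i]'(by omega) + d ≤ l[i+d]'h := by
  intro d
  induction d with
  | zero => intro i h; simp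
  | succ n ih =>
    intro i h
    have h1 := ih i (by omega)
    have h2 : l[i+n]'(by omega) < l[i+n+1]'(by omega) :=
      List.pairwise_iff_getElem.mp hs (i+n) (i+n+1) (by omega) (by omega) (by omega)
    simp only [show i + (n+1) = i + n + 1 from by omega]
    omega

lemma betaSet_ptnOfBetaSet (S : Finset ℕ) :
    betaSet (ptnOfBetaSet S) S.card = S ∧
    Multiset.card (ptnOfBetaSet S).2.parts ≤ S.card := by
  set K := S.card with hK
  set l := S.sort (· ≤ ·) with hl
  have hlen : l.length = K := Finset.length_sort _
  have hslt : l.Pairwise (· < ·) := (Finset.sortedLT_sort S).pairwise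
  have hge : ∀ i (h : i < K), i ≤ l[i]'(by omega) := fun i h =>
    sorted_lt_le_getElem hslt i (by omega)
  set f : ℕ → ℕ := fun i => l.getD i 0 - i with hf
  set a : ℕ → ℕ := fun i => f (K-1-i) with ha
  have hfg : ∀ i (h : i < K), f i = l[i]'(by omega) - i := by
    intro i h
    rw [hf]
    simp only
    rw [List.getD_eq_getElem _ _ (by omega)]
  have hanti : ∀ i j : ℕ, i ≤ j → j < K → a j ≤ a i := by
    intro i j hij hjK
    have hu : K-1-j < K := by omega
    have hv : K-1-i < K := by omega
    have h1 := sorted_lt_getElem_le hslt ((K-1-i) - (K-1-j)) (K-1-j) (by omega)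
    have h2 := hge (K-1-j) hu
    rw [ha]
    simp only
    rw [hfg _ hu, hfg _ hv]
    simp only [show K-1-j + ((K-1-i) - (K-1-j)) = K-1-i from by omega] at h1
    omega
  have hq : ptnOfBetaSet S = ptnOfMultiset ↑((List.range K).map a) := by
    unfold ptnOfBetaSet
    have hmi : l.mapIdx (fun i b => b - i) = (List.range K).map f := by
      apply List.ext_getElem (by simp [hlen])
      intro n h1 h2
      rw [List.getElem_mapIdx]
      simp only [List.getElem_map, List.getElem_range]
      rw [hfg n (by simp at h1; omega)]
    rw [← hl, hmi]
    congr 1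
    rw [Multiset.coe_eq_coe]
    exact (map_rev_perm K f).symm
  obtain ⟨hAt, hcard⟩ := partAt_ptnOfMultiset K a hanti
  rw [← hq] at hAt hcard
  refine ⟨?_, hcard⟩
  unfold betaSet
  ext x
  simp only [Finset.mem_image, Finset.mem_range]
  constructor
  · rintro ⟨i, hi, rfl⟩
    rw [hAt i hi]
    have hvK : K-1-i < K := by omega
    rw [ha]
    simp only
    rw [hfg _ hvK]
    have h2 := hge (K-1-i) hvK
    have : l[K-1-i]'(by omega) - (K-1-i) + (K - 1 - i) = l[K-1-i]'(by omega) := by omega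
    rw [this]
    have hm : l[K-1-i]'(by omega) ∈ l := List.getElem_mem _
    exact (Finset.mem_sort _).mp hm
  · intro hx
    have : x ∈ l := (Finset.mem_sort _).mpr hx
    obtain ⟨i, hi, rfl⟩ := List.getElem_of_mem this
    refine ⟨K-1-i, by omega, ?_⟩
    have hiK : i < K := by omega
    rw [hAt _ (by omega), ha]
    simp only
    have : K-1-(K-1-i) = i := by omega
    rw [this, hfg i hiK]
    have := hge i hiK
    omega

end Aux

namespace Aux

def cnt (t r : ℕ) (S : Finset ℕ) : ℕ := (S.filter (fun b => b % t = r)).card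

def coreSet (t : ℕ) (S : Finset ℕ) : Finset ℕ :=
  (Finset.range t).biUnion (fun r => (Finset.range (cnt t r S)).image (fun j => r + t * j))

def quotSet (t r : ℕ) (S : Finset ℕ) : Finset ℕ :=
  (S.filter (fun b => b % t = r)).image (fun b => b / t)

def shiftT (t : ℕ) (S : Finset ℕ) : Finset ℕ := Finset.range t ∪ S.image (· + t)

lemma core_eq (t : ℕ) (p : Ptn) :
    core t p = ptnOfBetaSet (coreSet t (betaSet p (beads t p))) := rfl

lemma quotient_eq (t : ℕ) (p : Ptn) :
    quotient t p = (List.range t).map (fun r =>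
      ptnOfBetaSet (quotSet t r (betaSet p (beads t p)))) := rfl

lemma mem_coreSet {t : ℕ} {S : Finset ℕ} {x : ℕ} :
    x ∈ coreSet t S ↔ ∃ r < t, ∃ j < cnt t r S, r + t * j = x := by
  simp [coreSet, Finset.mem_biUnion, Finset.mem_image, Finset.mem_range]

lemma mem_shiftT {t : ℕ} {S : Finset ℕ} {x : ℕ} :
    x ∈ shiftT t S ↔ x < t ∨ ∃ b ∈ S, b + t = x := by
  simp [shiftT, Finset.mem_union, Finset.mem_image, Finset.mem_range]

lemma filter_shiftT {t r : ℕ} (htr : r < t) (S : Finset ℕ) :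
    (shiftT t S).filter (fun b => b % t = r)
      = insert r ((S.filter (fun b => b % t = r)).image (· + t)) := by
  ext x
  simp only [Finset.mem_filter, Finset.mem_insert, Finset.mem_image, mem_shiftT]
  constructor
  · rintro ⟨hx | ⟨b, hb, rfl⟩, hmod⟩
    · left
      rw [Nat.mod_eq_of_lt hx] at hmod
      omega
    · right
      refine ⟨b, ⟨hb, ?_⟩, rfl⟩
      rwa [Nat.add_mod_right] at hmod
  · rintro (rfl | ⟨b, ⟨hb, hmod⟩, rfl⟩)
    · exact ⟨Or.inl htr, Nat.mod_eq_of_lt htr⟩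
    · exact ⟨Or.inr ⟨b, hb, rfl⟩, by rwa [Nat.add_mod_right]⟩

lemma cnt_shiftT {t r : ℕ} (htr : r < t) (S : Finset ℕ) :
    cnt t r (shiftT t S) = cnt t r S + 1 := by
  unfold cnt
  rw [filter_shiftT htr]
  rw [Finset.card_insert_of_notMem, Finset.card_image_of_injective _ (add_left_injective t)]
  intro hmem
  rw [Finset.mem_image] at hmem
  obtain ⟨b, _, hb⟩ := hmem
  omega

lemma coreSet_shiftT {t : ℕ} (ht : 0 < t) (S : Finset ℕ) :
    coreSet t (shiftT t S) = shiftT t (coreSet t S) := by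
  ext x
  rw [mem_coreSet, mem_shiftT]
  constructor
  · rintro ⟨r, hr, j, hj, rfl⟩
    rw [cnt_shiftT hr] at hj
    rcases Nat.eq_zero_or_pos j with rfl | hjpos
    · left; omega
    · right
      refine ⟨r + t * (j - 1), mem_coreSet.mpr ⟨r, hr, j - 1, by omega, rfl⟩, by
        have hmul : t * j = t * (j - 1) + t := by
          conv_lhs => rw [show j = j - 1 + 1 by omega]
          rw [Nat.mul_succ]
        omega⟩
  · rintro (hx | ⟨b, hb, rfl⟩)
    · exact ⟨x, hx, 0, by rw [cnt_shiftT hx]; omega, by omega⟩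
    · obtain ⟨r, hr, j, hj, rfl⟩ := mem_coreSet.mp hb
      exact ⟨r, hr, j + 1, by rw [cnt_shiftT hr]; omega, by rw [Nat.mul_succ]; omega⟩

lemma quotSet_shiftT {t r : ℕ} (htr : r < t) (S : Finset ℕ) :
    quotSet t r (shiftT t S) = insert 0 ((quotSet t r S).image (· + 1)) := by
  unfold quotSet
  rw [filter_shiftT htr]
  ext x
  simp only [Finset.mem_image, Finset.mem_insert, Finset.mem_filter]
  constructor
  · rintro ⟨b, rfl | hb, rfl⟩
    · left; exact Nat.div_eq_of_lt htr
    · obtain ⟨c, hc, rfl⟩ := hb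
      right
      exact ⟨c / t, ⟨c, hc, rfl⟩, by rw [Nat.add_div_right _ (by omega)]⟩
  · rintro (rfl | ⟨y, ⟨c, hc, rfl⟩, rfl⟩)
    · exact ⟨r, Or.inl rfl, Nat.div_eq_of_lt htr⟩
    · exact ⟨c + t, Or.inr ⟨c, hc, rfl⟩, by rw [Nat.add_div_right _ (by omega)]⟩

end Aux

namespace Aux

lemma ptnOfMultiset_congr {m m' : Multiset ℕ}
    (h : m.filter (fun x => 0 < x) = m'.filter (fun x => 0 < x)) :
    ptnOfMultiset m = ptnOfMultiset m' := by
  apply ptn_ext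
  · show (m.filter (fun x => 0 < x)).sum = (m'.filter (fun x => 0 < x)).sum
    rw [h]
  · exact h

lemma sort_shiftT {t : ℕ} (S : Finset ℕ) :
    (shiftT t S).sort (· ≤ ·) = List.range t ++ (S.sort (· ≤ ·)).map (· + t) := by
  apply sort_eq_of_sorted_lt
  · rw [List.pairwise_append]
    refine ⟨List.pairwise_lt_range, ?_, ?_⟩
    · refine List.Pairwise.map _ ?_ (Finset.sortedLT_sort S).pairwise
      intro a b hab
      omega
    · intro a ha b hb
      rw [List.mem_range] at ha
      rw [List.mem_map] at hb
      obtain ⟨c, _, rfl⟩ := hb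
      omega
  · intro x
    rw [List.mem_append, List.mem_range, List.mem_map, mem_shiftT]
    constructor
    · rintro (hx | ⟨c, hc, rfl⟩)
      · exact Or.inl hx
      · exact Or.inr ⟨c, (Finset.mem_sort _).mp hc, rfl⟩
    · rintro (hx | ⟨c, hc, rfl⟩)
      · exact Or.inl hx
      · exact Or.inr ⟨c, (Finset.mem_sort _).mpr hc, rfl⟩

lemma ptnOfBetaSet_shift1 (S : Finset ℕ) :
    ptnOfBetaSet (insert 0 (S.image (· + 1))) = ptnOfBetaSet S := by
  unfold ptnOfBetaSet
  have hsort : (insert 0 (S.image (· + 1))).sort (· ≤ ·) = 0 :: (S.sort (· ≤ ·)).map (· + 1) := by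
    apply sort_eq_of_sorted_lt
    · rw [List.pairwise_cons]
      constructor
      · intro b hb
        rw [List.mem_map] at hb
        obtain ⟨c, _, rfl⟩ := hb
        omega
      · refine List.Pairwise.map _ ?_ (Finset.sortedLT_sort S).pairwise
        intro a b hab; omega
    · intro x
      simp only [List.mem_cons, List.mem_map, Finset.mem_insert, Finset.mem_image]
      constructor
      · rintro (rfl | ⟨c, hc, rfl⟩)
        · exact Or.inl rfl
        · exact Or.inr ⟨c, (Finset.mem_sort _).mp hc, rfl⟩
      · rintro (rfl | ⟨c, hc, rfl⟩)
        · exact Or.inl rfl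
        · exact Or.inr ⟨c, (Finset.mem_sort _).mpr hc, rfl⟩
  rw [hsort, List.mapIdx_cons]
  have hmi : List.mapIdx (fun i b => b - (i + 1)) ((S.sort (· ≤ ·)).map (· + 1))
      = List.mapIdx (fun i b => b - i) (S.sort (· ≤ ·)) := by
    apply List.ext_getElem (by simp)
    intro n h1 h2
    rw [List.getElem_mapIdx, List.getElem_mapIdx]
    simp
  rw [hmi]
  apply ptnOfMultiset_congr
  have : ((0 : ℕ) :: List.mapIdx (fun i b => b - i) (S.sort (· ≤ ·)) : Multiset ℕ)
      = 0 ::ₘ ↑(List.mapIdx (fun i b => b - i) (S.sort (· ≤ ·))) := rfl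
  rw [this, Multiset.filter_cons]
  simp

lemma ptnOfBetaSet_shiftT {t : ℕ} (S : Finset ℕ) :
    ptnOfBetaSet (shiftT t S) = ptnOfBetaSet S := by
  unfold ptnOfBetaSet
  rw [sort_shiftT, List.mapIdx_append]
  have h1 : List.mapIdx (fun i b => b - i) (List.range t) = List.replicate t 0 := by
    apply List.ext_getElem (by simp)
    intro n hn1 hn2
    rw [List.getElem_mapIdx]
    simp
  have h2 : List.mapIdx (fun i b => b - (i + (List.range t).length)) ((S.sort (· ≤ ·)).map (· + t))
      = List.mapIdx (fun i b => b - i) (S.sort (· ≤ ·)) := by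
    apply List.ext_getElem (by simp)
    intro n hn1 hn2
    rw [List.getElem_mapIdx, List.getElem_mapIdx]
    simp
    omega
  rw [h1, h2]
  apply ptnOfMultiset_congr
  have hco : ((List.replicate t 0 ++ List.mapIdx (fun i b => b - i) (S.sort (· ≤ ·)) : List ℕ) : Multiset ℕ)
      = Multiset.replicate t 0 + ((List.mapIdx (fun i b => b - i) (S.sort (· ≤ ·)) : List ℕ) : Multiset ℕ) := by
    rw [← Multiset.coe_add, ← Multiset.coe_replicate]
  rw [hco, Multiset.filter_add]
  have hz : Multiset.filter (fun x => 0 < x) (Multiset.replicate t 0) = 0 := by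
    rw [Multiset.filter_eq_nil]
    intro x hx
    rw [Multiset.eq_of_mem_replicate hx]
    omega
  rw [hz, zero_add]

end Aux

namespace Aux


lemma add_mul_inj {t r : ℕ} (ht : 0 < t) : Function.Injective (fun j => r + t * j) := by
  intro a b hab
  dsimp at hab
  have h : t * a = t * b := by omega
  exact Nat.eq_of_mul_eq_mul_left ht h

lemma card_betaSet (p : Ptn) (K : ℕ) : (betaSet p K).card = K := by
  have h := sort_betaSet p K
  have h1 : ((betaSet p K).sort (· ≤ ·)).length = (betaSet p K).card := Finset.length_sort _
  rw [h] at h1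
  simpa using h1.symm

lemma sum_cnt {t : ℕ} (ht : 0 < t) (S : Finset ℕ) :
    S.card = ∑ r ∈ Finset.range t, cnt t r S := by
  apply Finset.card_eq_sum_card_fiberwise
  intro x _
  rw [Finset.mem_coe, Finset.mem_range]
  exact Nat.mod_lt _ ht

lemma card_coreSet {t : ℕ} (ht : 0 < t) (S : Finset ℕ) :
    (coreSet t S).card = S.card := by
  unfold coreSet
  rw [Finset.card_biUnion, sum_cnt ht S]
  · apply Finset.sum_congr rfl
    intro r _
    rw [Finset.card_image_of_injective _ (add_mul_inj ht)]
    simp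
  · intro r hr r' hr' hne
    rw [Finset.mem_coe, Finset.mem_range] at hr hr'
    apply Finset.disjoint_left.mpr
    intro x hx hx'
    rw [Finset.mem_image] at hx hx'
    obtain ⟨j, _, rfl⟩ := hx
    obtain ⟨j', _, hj'⟩ := hx'
    have e1 : (r + t * j) % t = r := by
      rw [Nat.add_mul_mod_self_left, Nat.mod_eq_of_lt hr]
    have e2 : (r' + t * j') % t = r' := by
      rw [Nat.add_mul_mod_self_left, Nat.mod_eq_of_lt hr']
    rw [hj'] at e2
    omega

lemma card_quotSet {t r : ℕ} (ht : 0 < t) (S : Finset ℕ) :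
    (quotSet t r S).card = cnt t r S := by
  unfold quotSet cnt
  apply Finset.card_image_of_injOn
  intro b hb b' hb' hbb
  rw [Finset.mem_coe, Finset.mem_filter] at hb hb'
  dsimp at hbb
  have h1 := Nat.div_add_mod b t
  have h2 := Nat.div_add_mod b' t
  rw [hbb] at h1
  omega

lemma cnt_coreSet {t r : ℕ} (htr : r < t) (S : Finset ℕ) :
    cnt t r (coreSet t S) = cnt t r S := by
  unfold cnt
  have hfe : (coreSet t S).filter (fun b => b % t = r)
      = (Finset.range (cnt t r S)).image (fun j => r + t * j) := by
    ext x
    rw [Finset.mem_filter, mem_coreSet, Finset.mem_image]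
    constructor
    · rintro ⟨⟨r', hr', j, hj, rfl⟩, hmod⟩
      rw [Nat.add_mul_mod_self_left, Nat.mod_eq_of_lt hr'] at hmod
      subst hmod
      exact ⟨j, Finset.mem_range.mpr hj, rfl⟩
    · rintro ⟨j, hj, rfl⟩
      rw [Finset.mem_range] at hj
      exact ⟨⟨r, htr, j, hj, rfl⟩, by rw [Nat.add_mul_mod_self_left, Nat.mod_eq_of_lt htr]⟩
  rw [hfe, Finset.card_image_of_injective _ (add_mul_inj (by omega))]
  simp [cnt]

lemma coreSet_coreSet {t : ℕ} (ht : 0 < t) (S : Finset ℕ) :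
    coreSet t (coreSet t S) = coreSet t S := by
  ext x
  rw [mem_coreSet, mem_coreSet]
  constructor
  · rintro ⟨r, hr, j, hj, rfl⟩
    rw [cnt_coreSet hr] at hj
    exact ⟨r, hr, j, hj, rfl⟩
  · rintro ⟨r, hr, j, hj, rfl⟩
    rw [← cnt_coreSet hr S] at hj
    exact ⟨r, hr, j, hj, rfl⟩

lemma quotSet_coreSet {t r : ℕ} (htr : r < t) (S : Finset ℕ) :
    quotSet t r (coreSet t S) = Finset.range (cnt t r S) := by
  unfold quotSet
  have hfe : (coreSet t S).filter (fun b => b % t = r)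
      = (Finset.range (cnt t r S)).image (fun j => r + t * j) := by
    ext x
    rw [Finset.mem_filter, mem_coreSet, Finset.mem_image]
    constructor
    · rintro ⟨⟨r', hr', j, hj, rfl⟩, hmod⟩
      rw [Nat.add_mul_mod_self_left, Nat.mod_eq_of_lt hr'] at hmod
      subst hmod
      exact ⟨j, Finset.mem_range.mpr hj, rfl⟩
    · rintro ⟨j, hj, rfl⟩
      rw [Finset.mem_range] at hj
      exact ⟨⟨r, htr, j, hj, rfl⟩, by rw [Nat.add_mul_mod_self_left, Nat.mod_eq_of_lt htr]⟩
  rw [hfe, Finset.image_image]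
  ext x
  rw [Finset.mem_image, Finset.mem_range]
  constructor
  · rintro ⟨j, hj, rfl⟩
    rw [Finset.mem_range] at hj
    have : (r + t * j) / t = j := by
      rw [Nat.add_mul_div_left _ _ (by omega), Nat.div_eq_of_lt htr, zero_add]
    simp only [Function.comp]
    rw [this]  -- careful
    exact hj
  · intro hx
    refine ⟨x, Finset.mem_range.mpr hx, ?_⟩
    simp only [Function.comp]
    rw [Nat.add_mul_div_left _ _ (by omega), Nat.div_eq_of_lt htr, zero_add]

lemma recon {t : ℕ} (ht : 0 < t) (S : Finset ℕ) :
    S = (Finset.range t).biUnion (fun r => (quotSet t r S).image (fun x => t * x + r)) := by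
  ext b
  rw [Finset.mem_biUnion]
  constructor
  · intro hb
    refine ⟨b % t, Finset.mem_range.mpr (Nat.mod_lt _ ht), ?_⟩
    rw [Finset.mem_image]
    refine ⟨b / t, ?_, Nat.div_add_mod b t⟩
    unfold quotSet
    exact Finset.mem_image_of_mem _ (Finset.mem_filter.mpr ⟨hb, rfl⟩)
  · rintro ⟨r, hr, hb⟩
    rw [Finset.mem_image] at hb
    obtain ⟨x, hx, rfl⟩ := hb
    unfold quotSet at hx
    rw [Finset.mem_image] at hx
    obtain ⟨c, hc, rfl⟩ := hx
    rw [Finset.mem_filter] at hc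
    have : t * (c / t) + r = c := by
      have := Nat.div_add_mod c t
      omega
    rw [this]
    exact hc.1

def cp (t : ℕ) (p : Ptn) (K : ℕ) : Ptn := ptnOfBetaSet (coreSet t (betaSet p K))
def qp (t r : ℕ) (p : Ptn) (K : ℕ) : Ptn := ptnOfBetaSet (quotSet t r (betaSet p K))

lemma betaSet_add_t {t : ℕ} (ht : 0 < t) (p : Ptn) (K : ℕ)
    (hK : Multiset.card p.2.parts ≤ K) :
    betaSet p (K + t) = shiftT t (betaSet p K) := by
  ext x
  rw [mem_shiftT]
  unfold betaSet
  simp only [Finset.mem_image, Finset.mem_range]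
  constructor
  · rintro ⟨i, hi, rfl⟩
    by_cases hiK : i < K
    · right
      exact ⟨partAt p i + (K - 1 - i), ⟨i, hiK, rfl⟩, by omega⟩
    · left
      rw [partAt_eq_zero p (by omega)]
      omega
  · rintro (hx | ⟨b, ⟨i, hi, rfl⟩, rfl⟩)
    · refine ⟨K + t - 1 - x, by omega, ?_⟩
      rw [partAt_eq_zero p (by omega)]
      omega
    · exact ⟨i, by omega, by omega⟩

lemma cp_add_t {t : ℕ} (ht : 0 < t) (p : Ptn) (K : ℕ) (hK : Multiset.card p.2.parts ≤ K) :
    cp t p (K + t) = cp t p K := by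
  unfold cp
  rw [betaSet_add_t ht p K hK, coreSet_shiftT ht, ptnOfBetaSet_shiftT]

lemma qp_add_t {t r : ℕ} (htr : r < t) (p : Ptn) (K : ℕ) (hK : Multiset.card p.2.parts ≤ K) :
    qp t r p (K + t) = qp t r p K := by
  unfold qp
  rw [betaSet_add_t (by omega) p K hK, quotSet_shiftT htr, ptnOfBetaSet_shift1]

lemma cp_invariant {t : ℕ} (ht : 0 < t) (p : Ptn) (K₁ K₂ : ℕ)
    (h1 : Multiset.card p.2.parts ≤ K₁) (h2 : Multiset.card p.2.parts ≤ K₂)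
    (hd1 : t ∣ K₁) (hd2 : t ∣ K₂) : cp t p K₁ = cp t p K₂ := by
  have key : ∀ m K, Multiset.card p.2.parts ≤ K → cp t p (K + t * m) = cp t p K := by
    intro m
    induction m with
    | zero => intro K hK; simp
    | succ n ih =>
      intro K hK
      have : K + t * (n + 1) = (K + t * n) + t := by ring
      rw [this, cp_add_t ht p _ (by omega), ih K hK]
  rcases le_total K₁ K₂ with h | h
  · obtain ⟨m, hm⟩ : t ∣ K₂ - K₁ := Nat.dvd_sub hd2 hd1
    have : K₂ = K₁ + t * m := by omega
    rw [this, key m K₁ h1]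
  · obtain ⟨m, hm⟩ : t ∣ K₁ - K₂ := Nat.dvd_sub hd1 hd2
    have : K₁ = K₂ + t * m := by omega
    rw [this, key m K₂ h2]

lemma qp_invariant {t r : ℕ} (htr : r < t) (p : Ptn) (K₁ K₂ : ℕ)
    (h1 : Multiset.card p.2.parts ≤ K₁) (h2 : Multiset.card p.2.parts ≤ K₂)
    (hd1 : t ∣ K₁) (hd2 : t ∣ K₂) : qp t r p K₁ = qp t r p K₂ := by
  have key : ∀ m K, Multiset.card p.2.parts ≤ K → qp t r p (K + t * m) = qp t r p K := by
    intro m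
    induction m with
    | zero => intro K hK; simp
    | succ n ih =>
      intro K hK
      have : K + t * (n + 1) = (K + t * n) + t := by ring
      rw [this, qp_add_t htr p _ (by omega), ih K hK]
  rcases le_total K₁ K₂ with h | h
  · obtain ⟨m, hm⟩ : t ∣ K₂ - K₁ := Nat.dvd_sub hd2 hd1
    have : K₂ = K₁ + t * m := by omega
    rw [this, key m K₁ h1]
  · obtain ⟨m, hm⟩ : t ∣ K₁ - K₂ := Nat.dvd_sub hd1 hd2
    have : K₁ = K₂ + t * m := by omega
    rw [this, key m K₂ h2]

lemma core_eq_cp {t : ℕ} (ht : 0 < t) (p : Ptn) (K : ℕ)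
    (hK : Multiset.card p.2.parts ≤ K) (hd : t ∣ K) : core t p = cp t p K := by
  rw [core_eq]
  show cp t p (beads t p) = cp t p K
  apply cp_invariant ht p _ _ _ hK _ hd
  · show Multiset.card p.2.parts ≤ t * Multiset.card p.2.parts
    calc Multiset.card p.2.parts = 1 * Multiset.card p.2.parts := by ring
    _ ≤ t * Multiset.card p.2.parts := Nat.mul_le_mul_right _ ht
  · exact Dvd.intro _ rfl

lemma quotient_eq_qp {t : ℕ} (ht : 0 < t) (p : Ptn) (K : ℕ)
    (hK : Multiset.card p.2.parts ≤ K) (hd : t ∣ K) :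
    quotient t p = (List.range t).map (fun r => qp t r p K) := by
  rw [quotient_eq]
  apply List.map_congr_left
  intro r hr
  rw [List.mem_range] at hr
  show qp t r p (beads t p) = qp t r p K
  apply qp_invariant hr p _ _ _ hK _ hd
  · show Multiset.card p.2.parts ≤ t * Multiset.card p.2.parts
    calc Multiset.card p.2.parts = 1 * Multiset.card p.2.parts := by ring
    _ ≤ t * Multiset.card p.2.parts := Nat.mul_le_mul_right _ ht
  · exact Dvd.intro _ rfl

end Aux

namespace Aux

lemma card_le_beads {t : ℕ} (ht : 0 < t) (p : Ptn) :
    Multiset.card p.2.parts ≤ beads t p := by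
  show Multiset.card p.2.parts ≤ t * Multiset.card p.2.parts
  calc Multiset.card p.2.parts = 1 * Multiset.card p.2.parts := by ring
  _ ≤ t * Multiset.card p.2.parts := Nat.mul_le_mul_right _ ht

lemma dvd_beads (t : ℕ) (p : Ptn) : t ∣ beads t p := Dvd.intro _ rfl

lemma betaSet_core {t : ℕ} (ht : 0 < t) (p : Ptn) (K : ℕ)
    (hK : Multiset.card p.2.parts ≤ K) (hd : t ∣ K) :
    betaSet (core t p) K = coreSet t (betaSet p K) ∧
    Multiset.card (core t p).2.parts ≤ K := by
  have hcp : core t p = ptnOfBetaSet (coreSet t (betaSet p K)) := core_eq_cp ht p K hK hd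
  have hcard : (coreSet t (betaSet p K)).card = K := by
    rw [card_coreSet ht, card_betaSet]
  obtain ⟨h1, h2⟩ := betaSet_ptnOfBetaSet (coreSet t (betaSet p K))
  rw [hcard] at h1 h2
  rw [hcp]
  exact ⟨h1, h2⟩

lemma core_core {t : ℕ} (ht : 0 < t) (p : Ptn) : core t (core t p) = core t p := by
  set K := beads t p with hKdef
  have hK : Multiset.card p.2.parts ≤ K := card_le_beads ht p
  have hd : t ∣ K := dvd_beads t p
  obtain ⟨hbs, hcd⟩ := betaSet_core ht p K hK hd
  rw [core_eq_cp ht (core t p) K hcd hd]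
  unfold cp
  rw [hbs, coreSet_coreSet ht]
  exact (core_eq_cp ht p K hK hd).symm

lemma sort_range (n : ℕ) : (Finset.range n).sort (· ≤ ·) = List.range n := by
  apply sort_eq_of_sorted_lt
  · exact List.pairwise_lt_range
  · intro x; simp

lemma ptnOfBetaSet_range (n : ℕ) : ptnOfBetaSet (Finset.range n) = emptyPtn := by
  apply eq_empty
  show (Multiset.filter (fun x => 0 < x)
    ((((Finset.range n).sort (· ≤ ·)).mapIdx (fun i b => b - i) : List ℕ) : Multiset ℕ)).sum = 0
  rw [sort_range]
  have : (List.range n).mapIdx (fun i b => b - i) = List.replicate n 0 := by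
    apply List.ext_getElem (by simp)
    intro i h1 h2
    rw [List.getElem_mapIdx]
    simp
  rw [this]
  have hz : Multiset.filter (fun x => 0 < x) ((List.replicate n 0 : List ℕ) : Multiset ℕ) = 0 := by
    rw [Multiset.coe_replicate, Multiset.filter_eq_nil]
    intro x hx
    rw [Multiset.eq_of_mem_replicate hx]
    omega
  rw [hz]
  rfl

lemma quotient_core {t : ℕ} (ht : 0 < t) (p : Ptn) :
    quotient t (core t p) = List.replicate t emptyPtn := by
  set K := beads t p with hKdef
  have hK : Multiset.card p.2.parts ≤ K := card_le_beads ht p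
  have hd : t ∣ K := dvd_beads t p
  obtain ⟨hbs, hcd⟩ := betaSet_core ht p K hK hd
  rw [quotient_eq_qp ht (core t p) K hcd hd]
  have : ∀ r ∈ List.range t, qp t r (core t p) K = emptyPtn := by
    intro r hr
    rw [List.mem_range] at hr
    unfold qp
    rw [hbs, quotSet_coreSet hr, ptnOfBetaSet_range]
  rw [List.map_congr_left this]
  simp

lemma core_quotient_inj {t : ℕ} (ht : 0 < t) (p p' : Ptn)
    (hcore : core t p = core t p') (hquot : quotient t p = quotient t p') : p = p' := by
  set K := max (beads t p) (beads t p') with hKdef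
  have hd : t ∣ K := by
    rcases le_total (beads t p) (beads t p') with h | h
    · rw [hKdef, max_eq_right h]; exact dvd_beads t p'
    · rw [hKdef, max_eq_left h]; exact dvd_beads t p
  have hK : Multiset.card p.2.parts ≤ K := le_trans (card_le_beads ht p) (le_max_left _ _)
  have hK' : Multiset.card p'.2.parts ≤ K := le_trans (card_le_beads ht p') (le_max_right _ _)
  obtain ⟨hbs, _⟩ := betaSet_core ht p K hK hd
  obtain ⟨hbs', _⟩ := betaSet_core ht p' K hK' hd
  have hcs : coreSet t (betaSet p K) = coreSet t (betaSet p' K) := by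
    rw [← hbs, ← hbs', hcore]
  have hcnt : ∀ r, r < t → cnt t r (betaSet p K) = cnt t r (betaSet p' K) := by
    intro r hr
    rw [← cnt_coreSet hr, hcs, cnt_coreSet hr]
  have hqp : ∀ r, r < t → qp t r p K = qp t r p' K := by
    intro r hr
    have h1 := quotient_eq_qp ht p K hK hd
    have h2 := quotient_eq_qp ht p' K hK' hd
    rw [hquot, h2] at h1
    have := congrArg (fun l => l.getD r emptyPtn) h1
    simpa [List.getD_eq_getElem?_getD, List.getElem?_map, List.getElem?_range hr] using this.symm
  have hqs : ∀ r, r < t → quotSet t r (betaSet p K) = quotSet t r (betaSet p' K) := by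
    intro r hr
    have c1 : (quotSet t r (betaSet p K)).card = cnt t r (betaSet p K) := card_quotSet ht _
    have c2 : (quotSet t r (betaSet p' K)).card = cnt t r (betaSet p' K) := card_quotSet ht _
    obtain ⟨g1, _⟩ := betaSet_ptnOfBetaSet (quotSet t r (betaSet p K))
    obtain ⟨g2, _⟩ := betaSet_ptnOfBetaSet (quotSet t r (betaSet p' K))
    rw [c1] at g1
    rw [c2] at g2
    have : qp t r p K = qp t r p' K := hqp r hr
    unfold qp at this
    rw [← g1, ← g2, this, hcnt r hr]
  have hS : betaSet p K = betaSet p' K := by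
    rw [recon ht (betaSet p K), recon ht (betaSet p' K)]
    apply Finset.biUnion_congr rfl
    intro r hr
    rw [Finset.mem_range] at hr
    rw [hqs r hr]
  calc p = ptnOfBetaSet (betaSet p K) := (ptnOfBetaSet_betaSet p K hK).symm
  _ = ptnOfBetaSet (betaSet p' K) := by rw [hS]
  _ = p' := ptnOfBetaSet_betaSet p' K hK'

end Aux

namespace Aux

lemma cnt_betaSet_grow {t r : ℕ} (htr : r < t) (p : Ptn) (K m : ℕ)
    (hK : Multiset.card p.2.parts ≤ K) :
    cnt t r (betaSet p (K + t * m)) = cnt t r (betaSet p K) + m := by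
  induction m with
  | zero => simp
  | succ n ih =>
    have h1 : K + t * (n + 1) = (K + t * n) + t := by ring
    rw [h1, betaSet_add_t (by omega) p _ (by omega), cnt_shiftT htr, ih]
    omega

lemma mul_inj {t r : ℕ} (ht : 0 < t) : Function.Injective (fun x => t * x + r) := by
  intro a b hab
  dsimp at hab
  have h : t * a = t * b := by omega
  exact Nat.eq_of_mul_eq_mul_left ht h

lemma combine {t : ℕ} (ht : 0 < t) (c : Ptn) (hc : core t c = c) (qs : ℕ → Ptn) :
    ∃ p : Ptn, core t p = c ∧ quotient t p = (List.range t).map qs := by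
  classical
  obtain ⟨N, hN⟩ : ∃ N, N = ∑ r ∈ Finset.range t, Multiset.card (qs r).2.parts := ⟨_, rfl⟩
  obtain ⟨K, hKdef⟩ : ∃ K, K = beads t c + t * N := ⟨_, rfl⟩
  have hd : t ∣ K := by
    rw [hKdef]
    exact Nat.dvd_add (dvd_beads t c) (Dvd.intro _ rfl)
  have hKc : Multiset.card c.2.parts ≤ K := by
    have := card_le_beads ht c
    omega
  have hcr : ∀ r, r < t → Multiset.card (qs r).2.parts ≤ cnt t r (betaSet c K) := by
    intro r hr
    rw [hKdef, cnt_betaSet_grow hr c _ N (card_le_beads ht c)]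
    have : Multiset.card (qs r).2.parts ≤ N := by
      rw [hN]
      exact Finset.single_le_sum (f := fun r => Multiset.card (qs r).2.parts)
        (fun i _ => Nat.zero_le _) (Finset.mem_range.mpr hr)
    omega
  obtain ⟨S, hS⟩ : ∃ S : Finset ℕ, S = (Finset.range t).biUnion
      (fun r => (betaSet (qs r) (cnt t r (betaSet c K))).image (fun x => t * x + r)) := ⟨_, rfl⟩
  have hmemS : ∀ x, x ∈ S ↔ ∃ r < t, ∃ b ∈ betaSet (qs r) (cnt t r (betaSet c K)), t * b + r = x := by
    intro x
    rw [hS]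
    simp [Finset.mem_biUnion, Finset.mem_image, Finset.mem_range]
  have hfilter : ∀ r, r < t → S.filter (fun b => b % t = r)
      = (betaSet (qs r) (cnt t r (betaSet c K))).image (fun x => t * x + r) := by
    intro r hr
    ext x
    rw [Finset.mem_filter, hmemS, Finset.mem_image]
    constructor
    · rintro ⟨⟨r', hr', b, hb, rfl⟩, hmod⟩
      rw [Nat.mul_add_mod, Nat.mod_eq_of_lt hr'] at hmod
      subst hmod
      exact ⟨b, hb, rfl⟩
    · rintro ⟨b, hb, rfl⟩
      exact ⟨⟨r, hr, b, hb, rfl⟩, by rw [Nat.mul_add_mod, Nat.mod_eq_of_lt hr]⟩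
  have hcnt : ∀ r, r < t → cnt t r S = cnt t r (betaSet c K) := by
    intro r hr
    show (S.filter (fun b => b % t = r)).card = _
    rw [hfilter r hr, Finset.card_image_of_injective _ (mul_inj ht), card_betaSet]
  have hcardS : S.card = K := by
    rw [sum_cnt ht S]
    have h1 : ∑ r ∈ Finset.range t, cnt t r S = ∑ r ∈ Finset.range t, cnt t r (betaSet c K) :=
      Finset.sum_congr rfl (fun r hr => hcnt r (Finset.mem_range.mp hr))
    rw [h1, ← sum_cnt ht (betaSet c K), card_betaSet]
  have hquotS : ∀ r, r < t → quotSet t r S = betaSet (qs r) (cnt t r (betaSet c K)) := by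
    intro r hr
    unfold quotSet
    rw [hfilter r hr, Finset.image_image]
    have hco : ((fun b => b / t) ∘ fun x => t * x + r) = id := by
      funext x
      simp only [Function.comp, id]
      rw [Nat.mul_add_div ht, Nat.div_eq_of_lt hr, add_zero]
    rw [hco, Finset.image_id]
  have hcoreS : coreSet t S = coreSet t (betaSet c K) := by
    ext x
    rw [mem_coreSet, mem_coreSet]
    constructor
    · rintro ⟨r, hr, j, hj, rfl⟩
      rw [hcnt r hr] at hj
      exact ⟨r, hr, j, hj, rfl⟩
    · rintro ⟨r, hr, j, hj, rfl⟩
      rw [← hcnt r hr] at hj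
      exact ⟨r, hr, j, hj, rfl⟩
  obtain ⟨g1, g2⟩ := betaSet_ptnOfBetaSet S
  rw [hcardS] at g1 g2
  refine ⟨ptnOfBetaSet S, ?_, ?_⟩
  · rw [core_eq_cp ht (ptnOfBetaSet S) K g2 hd]
    unfold cp
    rw [g1, hcoreS]
    have h2 : core t c = cp t c K := core_eq_cp ht c K hKc hd
    unfold cp at h2
    rw [← h2, hc]
  · rw [quotient_eq_qp ht (ptnOfBetaSet S) K g2 hd]
    apply List.map_congr_left
    intro r hr
    rw [List.mem_range] at hr
    unfold qp
    rw [g1, hquotS r hr]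
    exact ptnOfBetaSet_betaSet (qs r) _ (hcr r hr)

end Aux

namespace Aux

lemma length_quotient (t : ℕ) (p : Ptn) : (quotient t p).length = t := by
  rw [quotient_eq]; simp

lemma quotient_getD (t : ℕ) (p : Ptn) :
    quotient t p = (List.range t).map (fun r => (quotient t p).getD r emptyPtn) := by
  apply List.ext_getElem (by simp [length_quotient])
  intro n h1 h2
  simp only [List.getElem_map, List.getElem_range]
  rw [List.getD_eq_getElem]

lemma preTower_succ_comm (t : ℕ) (p : Ptn) (k : ℕ) :
    preTower t p (k + 1) = (quotient t p).flatMap (fun q => preTower t q k) := by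
  induction k with
  | zero =>
    show (preTower t p 0).flatMap (quotient t) = _
    simp [preTower]
  | succ n ih =>
    show (preTower t p (n+1)).flatMap (quotient t) = _
    rw [ih, List.flatMap_assoc]
    apply congrArg (fun f => (quotient t p).flatMap f)
    funext q
    rfl

lemma towerRow_zero (t : ℕ) (p : Ptn) : towerRow t p 0 = [core t p] := rfl

lemma towerRow_succ (t : ℕ) (p : Ptn) (k : ℕ) :
    towerRow t p (k + 1) = (quotient t p).flatMap (fun q => towerRow t q k) := by
  unfold towerRow
  rw [preTower_succ_comm, List.map_flatMap]

lemma length_preTower (t : ℕ) (p : Ptn) (k : ℕ) : (preTower t p k).length = t ^ k := by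
  induction k generalizing p with
  | zero => rfl
  | succ n ih =>
    rw [preTower_succ_comm, List.length_flatMap]
    have hcg : ∀ q ∈ quotient t p, (fun q => (preTower t q n).length) q = t ^ n :=
      fun q _ => ih q
    rw [List.map_congr_left hcg]
    simp [length_quotient, pow_succ, mul_comm]

lemma length_towerRow (t : ℕ) (p : Ptn) (k : ℕ) : (towerRow t p k).length = t ^ k := by
  unfold towerRow
  rw [List.length_map, length_preTower]

noncomputable def rebuild (t : ℕ) (ht : 0 < t) : ℕ → Ptn → Ptn
  | 0, p => core t p
  | j + 1, p =>
    (combine ht (core t p) (core_core ht p)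
      (fun r => rebuild t ht j ((quotient t p).getD r emptyPtn))).choose

lemma rebuild_zero (t : ℕ) (ht : 0 < t) (p : Ptn) : rebuild t ht 0 p = core t p := rfl

lemma rebuild_succ_spec (t : ℕ) (ht : 0 < t) (j : ℕ) (p : Ptn) :
    core t (rebuild t ht (j+1) p) = core t p ∧
    quotient t (rebuild t ht (j+1) p) = (quotient t p).map (rebuild t ht j) := by
  have hspec := (combine ht (core t p) (core_core ht p)
    (fun r => rebuild t ht j ((quotient t p).getD r emptyPtn))).choose_spec
  have heq : rebuild t ht (j+1) p = (combine ht (core t p) (core_core ht p)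
      (fun r => rebuild t ht j ((quotient t p).getD r emptyPtn))).choose := by
    rfl
  rw [← heq] at hspec
  refine ⟨hspec.1, ?_⟩
  rw [hspec.2]
  conv_rhs => rw [quotient_getD t p]
  rw [List.map_map]
  rfl

lemma core_rebuild (t : ℕ) (ht : 0 < t) (j : ℕ) (p : Ptn) :
    core t (rebuild t ht j p) = core t p := by
  cases j with
  | zero => rw [rebuild_zero]; exact core_core ht p
  | succ n => exact (rebuild_succ_spec t ht n p).1

lemma towerRow_rebuild (t : ℕ) (ht : 0 < t) :
    ∀ j k p, k ≤ j → towerRow t (rebuild t ht j p) k = towerRow t p k := by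
  intro j
  induction j with
  | zero =>
    intro k p hk
    interval_cases k
    rw [towerRow_zero, towerRow_zero, core_rebuild]
  | succ n ih =>
    intro k p hk
    cases k with
    | zero => rw [towerRow_zero, towerRow_zero, core_rebuild]
    | succ m =>
      rw [towerRow_succ, towerRow_succ, (rebuild_succ_spec t ht n p).2, List.flatMap_map]
      apply congrArg List.flatten
      apply List.map_congr_left
      intro q _
      exact ih m q (by omega)

lemma genCore_rebuild (t : ℕ) (ht : 0 < t) :
    ∀ j p, IsGenCore t j (rebuild t ht j p) := by
  intro j
  induction j with
  | zero =>
    intro p q hq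
    rw [rebuild_zero] at hq
    rw [preTower_succ_comm, quotient_core ht] at hq
    rw [List.mem_flatMap] at hq
    obtain ⟨a, ha, hqa⟩ := hq
    have : a = emptyPtn := List.eq_of_mem_replicate ha
    subst this
    simp only [preTower, List.mem_singleton] at hqa
    subst hqa
    rfl
  | succ n ih =>
    intro p q hq
    rw [preTower_succ_comm, (rebuild_succ_spec t ht n p).2] at hq
    rw [List.flatMap_map, List.mem_flatMap] at hq
    obtain ⟨a, _, hqa⟩ := hq
    exact ih a q hqa

lemma flatMap_inj_blocks (f g : Ptn → List Ptn) (L : ℕ)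
    (hf : ∀ q, (f q).length = L) (hg : ∀ q, (g q).length = L) :
    ∀ l₁ l₂ : List Ptn, l₁.length = l₂.length →
      l₁.flatMap f = l₂.flatMap g → l₁.map f = l₂.map g := by
  intro l₁
  induction l₁ with
  | nil =>
    intro l₂ hlen _
    cases l₂ with
    | nil => rfl
    | cons b l => simp at hlen
  | cons a l ih =>
    intro l₂ hlen hfm
    cases l₂ with
    | nil => simp at hlen
    | cons b m =>
      rw [List.flatMap_cons, List.flatMap_cons] at hfm
      obtain ⟨h1, h2⟩ := List.append_inj hfm (by rw [hf, hg])
      rw [List.map_cons, List.map_cons, h1, ih m (by simpa using hlen) h2]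

lemma uniq (t : ℕ) (ht : 0 < t) :
    ∀ j ν ν', IsGenCore t j ν → IsGenCore t j ν' →
      (∀ k ≤ j, towerRow t ν k = towerRow t ν' k) → ν = ν' := by
  intro j
  induction j with
  | zero =>
    intro ν ν' hg hg' htw
    have hcore : core t ν = core t ν' := by
      have := htw 0 (le_refl 0)
      rw [towerRow_zero, towerRow_zero] at this
      simpa using this
    apply core_quotient_inj ht _ _ hcore
    have he : ∀ μ : Ptn, IsGenCore t 0 μ → quotient t μ = List.replicate t emptyPtn := by
      intro μ hμ
      have hmem : ∀ q ∈ quotient t μ, q = emptyPtn := by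
        intro q hq
        apply eq_empty
        apply hμ
        show q ∈ preTower t μ 1
        rw [preTower_succ_comm, List.mem_flatMap]
        exact ⟨q, hq, by simp [preTower]⟩
      rw [List.eq_replicate_iff]
      exact ⟨length_quotient t μ, hmem⟩
    rw [he ν hg, he ν' hg']
  | succ n ih =>
    intro ν ν' hg hg' htw
    have hcore : core t ν = core t ν' := by
      have := htw 0 (by omega)
      rw [towerRow_zero, towerRow_zero] at this
      simpa using this
    apply core_quotient_inj ht _ _ hcore
    have hlen : (quotient t ν).length = (quotient t ν').length := by
      rw [length_quotient, length_quotient]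
    have hmapeq : ∀ k ≤ n, (quotient t ν).map (fun q => towerRow t q k)
        = (quotient t ν').map (fun q => towerRow t q k) := by
      intro k hk
      apply flatMap_inj_blocks _ _ (t ^ k) (fun q => length_towerRow t q k)
        (fun q => length_towerRow t q k) _ _ hlen
      rw [← towerRow_succ, ← towerRow_succ]
      exact htw (k+1) (by omega)
    apply List.ext_getElem hlen
    intro r h1 h2
    have hrt : r < t := by rw [length_quotient] at h1; exact h1
    apply ih
    · intro q hq
      apply hg
      rw [preTower_succ_comm, List.mem_flatMap]
      exact ⟨_, List.getElem_mem h1, hq⟩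
    · intro q hq
      apply hg'
      rw [preTower_succ_comm, List.mem_flatMap]
      exact ⟨_, List.getElem_mem h2, hq⟩
    · intro k hk
      have := hmapeq k hk
      have h3 := congrArg (fun l => l.getD r ([] : List Ptn)) this
      rw [List.getD_eq_getElem _ _ (by simpa [length_quotient] using hrt),
          List.getD_eq_getElem _ _ (by simpa [length_quotient] using hrt)] at h3
      simpa using h3

end Aux

/-- every partition is `∼_j`-equivalent to a unique generalized
`(j,t)`-core, where `λ ∼_j μ` means `β_k(t;λ) = β_k(t;μ)` for all `0 ≤ k ≤ j`. -/
theorem unique_gen_core_in_class (t : ℕ) (ht : 2 ≤ t) (j : ℕ) (lam : Ptn) :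
    ∃! mu : Ptn, IsGenCore t j mu ∧ ∀ k ≤ j, towerRow t mu k = towerRow t lam k := by
  have ht0 : 0 < t := by omega
  refine ⟨Aux.rebuild t ht0 j lam,
    ⟨Aux.genCore_rebuild t ht0 j lam, fun k hk => Aux.towerRow_rebuild t ht0 j k lam hk⟩, ?_⟩
  rintro y ⟨hy1, hy2⟩
  exact Aux.uniq t ht0 j y _ hy1 (Aux.genCore_rebuild t ht0 j lam)
    (fun k hk => (hy2 k hk).trans (Aux.towerRow_rebuild t ht0 j k lam hk).symm)
end

section
/- For any integer m ≥ 1, the coefficients of the formal power series F_m(q) = ( ∑_{n≥1} σ_1(n) q^{mn} ) / (q; q)_∞ are nonnegative and monotonically increasing in n (for n ≥ m). -/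
open PowerSeries

noncomputable def geomS (k : ℕ) : PowerSeries ℚ :=
  PowerSeries.mk fun j => if k ∣ j then 1 else 0

lemma geomS_nonneg (k j : ℕ) : 0 ≤ PowerSeries.coeff (R := ℚ) j (geomS k) := by
  rw [geomS, coeff_mk]; split <;> norm_num

lemma one_sub_X_pow_mul_geomS (k : ℕ) (hk : 1 ≤ k) :
    (1 - PowerSeries.X ^ k) * geomS k = 1 := by
  ext j
  rw [sub_mul, one_mul, map_sub, mul_comm (PowerSeries.X ^ k), coeff_mul_X_pow']
  rcases Nat.eq_zero_or_pos j with rfl | hj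
  · have hk0 : ¬ k ≤ 0 := by omega
    rw [if_neg hk0, sub_zero]
    simp [geomS]
  · rw [show ((1 : ℚ⟦X⟧) = PowerSeries.C (R := ℚ) 1) by simp, coeff_C, if_neg hj.ne']
    by_cases hkj : k ≤ j
    · rw [if_pos hkj]
      simp only [geomS, coeff_mk]
      have : k ∣ j ↔ k ∣ j - k := by
        constructor
        · intro h; exact (Nat.dvd_sub h dvd_rfl)
        · intro h; have := Nat.dvd_add h (dvd_refl k); rwa [Nat.sub_add_cancel hkj] at this
      by_cases hd : k ∣ j
      · rw [if_pos hd, if_pos (this.mp hd), sub_self]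
      · rw [if_neg hd, if_neg (fun h => hd (this.mpr h)), sub_self]
    · rw [if_neg hkj, sub_zero]
      simp only [geomS, coeff_mk]
      rw [if_neg]; intro h
      exact hkj (Nat.le_of_dvd hj h)

noncomputable def Pprod (n : ℕ) : PowerSeries ℚ :=
  ∏ k ∈ Finset.Icc 1 n, (1 - PowerSeries.X ^ k)

noncomputable def Qprod (n : ℕ) : PowerSeries ℚ :=
  ∏ k ∈ Finset.Icc 1 n, geomS k

lemma Pprod_mul_Qprod (n : ℕ) : Pprod n * Qprod n = 1 := by
  rw [Pprod, Qprod, ← Finset.prod_mul_distrib]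
  exact Finset.prod_eq_one fun k hk => one_sub_X_pow_mul_geomS k (Finset.mem_Icc.mp hk).1

lemma constantCoeff_Pprod (n : ℕ) : PowerSeries.constantCoeff (R := ℚ) (Pprod n) = 1 := by
  rw [Pprod, map_prod]
  apply Finset.prod_eq_one
  intro k hk
  have hk1 : 1 ≤ k := (Finset.mem_Icc.mp hk).1
  simp [constantCoeff_X]
  omega

lemma Pprod_inv (n : ℕ) : (Pprod n)⁻¹ = Qprod n := by
  rw [PowerSeries.inv_eq_iff_mul_eq_one (by rw [constantCoeff_Pprod]; norm_num)]
  rw [mul_comm]; exact Pprod_mul_Qprod n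

lemma coeff_mul_nonneg {f g : PowerSeries ℚ} (hf : ∀ j, 0 ≤ PowerSeries.coeff (R := ℚ) j f)
    (hg : ∀ j, 0 ≤ PowerSeries.coeff (R := ℚ) j g) (j : ℕ) :
    0 ≤ PowerSeries.coeff (R := ℚ) j (f * g) := by
  rw [PowerSeries.coeff_mul]
  exact Finset.sum_nonneg fun x _ => mul_nonneg (hf _) (hg _)

lemma coeff_prod_nonneg {s : Finset ℕ} {f : ℕ → PowerSeries ℚ}
    (h : ∀ k ∈ s, ∀ j, 0 ≤ PowerSeries.coeff (R := ℚ) j (f k)) (j : ℕ) :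
    0 ≤ PowerSeries.coeff (R := ℚ) j (∏ k ∈ s, f k) := by
  induction s using Finset.cons_induction generalizing j with
  | empty => rw [Finset.prod_empty]; rw [show ((1:ℚ⟦X⟧) = PowerSeries.C (R := ℚ) 1) by simp,
      PowerSeries.coeff_C]; split <;> norm_num
  | cons a s ha ih =>
      rw [Finset.prod_cons]
      exact coeff_mul_nonneg (h a (Finset.mem_cons_self a s))
        (fun j => ih (fun k hk => h k (Finset.mem_cons_of_mem hk)) j) j

lemma coeff_Qprod_nonneg (n j : ℕ) : 0 ≤ PowerSeries.coeff (R := ℚ) j (Qprod n) :=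
  coeff_prod_nonneg (fun k _ => geomS_nonneg k) j

lemma X_pow_dvd_prod_sub_one {s : Finset ℕ} {n : ℕ} (h : ∀ k ∈ s, n + 1 ≤ k) :
    (PowerSeries.X : ℚ⟦X⟧) ^ (n + 1) ∣ (∏ k ∈ s, ((1 : ℚ⟦X⟧) - PowerSeries.X ^ k)) - 1 := by
  induction s using Finset.cons_induction with
  | empty => simp
  | cons a s ha ih =>
      rw [Finset.prod_cons]
      have h1 : (1 - PowerSeries.X ^ a) * (∏ k ∈ s, ((1 : ℚ⟦X⟧) - PowerSeries.X ^ k)) - 1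
          = (1 - PowerSeries.X ^ a) * ((∏ k ∈ s, ((1 : ℚ⟦X⟧) - PowerSeries.X ^ k)) - 1)
            - PowerSeries.X ^ a := by ring
      rw [h1]
      exact dvd_sub (Dvd.dvd.mul_left (ih fun k hk => h k (Finset.mem_cons_of_mem hk)) _)
        (pow_dvd_pow _ (h a (Finset.mem_cons_self a s)))

lemma coeff_Pprod_stable {i n N : ℕ} (hin : i ≤ n) (hnN : n ≤ N) :
    PowerSeries.coeff (R := ℚ) i (Pprod N) = PowerSeries.coeff (R := ℚ) i (Pprod n) := by
  have hsplit : Finset.Icc 1 N = Finset.Icc 1 n ∪ Finset.Icc (n + 1) N := by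
    ext x; simp only [Finset.mem_union, Finset.mem_Icc]; omega
  have hdisj : Disjoint (Finset.Icc 1 n) (Finset.Icc (n + 1) N) := by
    rw [Finset.disjoint_left]; intro x hx hx'
    simp only [Finset.mem_Icc] at hx hx'; omega
  rw [Pprod, hsplit, Finset.prod_union hdisj]
  set R : ℚ⟦X⟧ := ∏ k ∈ Finset.Icc (n + 1) N, (1 - PowerSeries.X ^ k) with hR
  have hdvd : (PowerSeries.X : ℚ⟦X⟧) ^ (n + 1) ∣ R - 1 :=
    X_pow_dvd_prod_sub_one fun k hk => (Finset.mem_Icc.mp hk).1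
  have : Pprod n * R = Pprod n + Pprod n * (R - 1) := by rw [Pprod]; ring
  rw [Pprod] at this
  rw [this, map_add, ← Pprod]
  have hz : PowerSeries.coeff (R := ℚ) i (Pprod n * (R - 1)) = 0 := by
    have : (PowerSeries.X : ℚ⟦X⟧) ^ (n + 1) ∣ Pprod n * (R - 1) := hdvd.mul_left _
    exact (PowerSeries.X_pow_dvd_iff.mp this) i (by omega)
  rw [hz, add_zero]

lemma inv_coeff_stable (A B : ℚ⟦X⟧) {n : ℕ}
    (h : ∀ i ≤ n, PowerSeries.coeff (R := ℚ) i A = PowerSeries.coeff (R := ℚ) i B) :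
    ∀ i ≤ n, PowerSeries.coeff (R := ℚ) i A⁻¹ = PowerSeries.coeff (R := ℚ) i B⁻¹ := by
  have h0 : PowerSeries.constantCoeff (R := ℚ) A = PowerSeries.constantCoeff (R := ℚ) B := by
    rw [← PowerSeries.coeff_zero_eq_constantCoeff_apply,
      ← PowerSeries.coeff_zero_eq_constantCoeff_apply]
    exact h 0 (Nat.zero_le n)
  intro i
  induction i using Nat.strong_induction_on with
  | _ i ih =>
    intro hi
    rw [PowerSeries.coeff_inv, PowerSeries.coeff_inv, h0]
    by_cases h0i : i = 0
    · rw [if_pos h0i, if_pos h0i]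
    · rw [if_neg h0i, if_neg h0i]
      congr 1
      apply Finset.sum_congr rfl
      intro x hx
      have hx' := Finset.HasAntidiagonal.mem_antidiagonal.mp hx
      by_cases hlt : x.2 < i
      · rw [if_pos hlt, if_pos hlt, h x.1 (by omega), ih x.2 hlt (by omega)]
      · rw [if_neg hlt, if_neg hlt]

lemma coeff_euler_eq_Pprod {i n : ℕ} (hin : i ≤ n) :
    PowerSeries.coeff (R := ℚ) i (eulerProd 1 1) = PowerSeries.coeff (R := ℚ) i (Pprod n) := by
  rw [eulerProd, coeff_mk]
  have : (∏ k ∈ Finset.Icc 1 i, ((1:ℚ⟦X⟧) - PowerSeries.X ^ (1 * k)) ^ 1) = Pprod i := by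
    rw [Pprod]; apply Finset.prod_congr rfl; intro k _; rw [one_mul, pow_one]
  rw [this, ← coeff_Pprod_stable (le_refl i) hin]

lemma coeff_Einv_eq (j n : ℕ) (h : j ≤ n) :
    PowerSeries.coeff (R := ℚ) j (eulerProd 1 1)⁻¹ = PowerSeries.coeff (R := ℚ) j (Qprod n) := by
  rw [← Pprod_inv n]
  exact inv_coeff_stable _ _ (fun i hi => coeff_euler_eq_Pprod hi) j h

lemma coeff_Einv_nonneg (j : ℕ) : 0 ≤ PowerSeries.coeff (R := ℚ) j (eulerProd 1 1)⁻¹ := by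
  rw [coeff_Einv_eq j j le_rfl]; exact coeff_Qprod_nonneg j j

lemma coeff_one_sub_X_mul_Einv_nonneg (j : ℕ) :
    0 ≤ PowerSeries.coeff (R := ℚ) j ((1 - PowerSeries.X) * (eulerProd 1 1)⁻¹) := by
  have hexp : ((1:ℚ⟦X⟧) - PowerSeries.X) * (eulerProd 1 1)⁻¹
      = (eulerProd 1 1)⁻¹ - PowerSeries.X * (eulerProd 1 1)⁻¹ := by ring
  rw [hexp, map_sub]
  cases j with
  | zero =>
      have : PowerSeries.coeff (R := ℚ) 0 (PowerSeries.X * (eulerProd 1 1)⁻¹) = 0 := by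
        rw [PowerSeries.coeff_zero_eq_constantCoeff_apply, map_mul, constantCoeff_X, zero_mul]
      rw [this, sub_zero]; exact coeff_Einv_nonneg 0
  | succ j =>
      rw [PowerSeries.coeff_succ_X_mul]
      rw [coeff_Einv_eq (j+1) (j+1) le_rfl, coeff_Einv_eq j (j+1) (by omega)]
      have hins : Finset.Icc 1 (j + 1) = insert 1 (Finset.Icc 2 (j + 1)) := by
        ext x; simp only [Finset.mem_insert, Finset.mem_Icc]; omega
      have h1 : (1:ℕ) ∉ Finset.Icc 2 (j + 1) := by simp
      have hq : Qprod (j + 1) = geomS 1 * ∏ k ∈ Finset.Icc 2 (j + 1), geomS k := by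
        rw [Qprod, hins, Finset.prod_insert h1]
      have key : ((1:ℚ⟦X⟧) - PowerSeries.X) * Qprod (j + 1)
          = ∏ k ∈ Finset.Icc 2 (j + 1), geomS k := by
        rw [hq, ← mul_assoc, ← pow_one (PowerSeries.X : ℚ⟦X⟧),
          one_sub_X_pow_mul_geomS 1 le_rfl, one_mul]
      have h2 : PowerSeries.coeff (R := ℚ) (j + 1) (Qprod (j+1)) - PowerSeries.coeff (R := ℚ) j (Qprod (j+1))
          = PowerSeries.coeff (R := ℚ) (j + 1) (∏ k ∈ Finset.Icc 2 (j + 1), geomS k) := by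
        rw [← key]
        have : ((1:ℚ⟦X⟧) - PowerSeries.X) * Qprod (j + 1)
            = Qprod (j + 1) - PowerSeries.X * Qprod (j + 1) := by ring
        rw [this, map_sub, PowerSeries.coeff_succ_X_mul]
      rw [h2]
      exact coeff_prod_nonneg (fun k _ => geomS_nonneg k) (j + 1)

lemma coeff_Gm_nonneg (m j : ℕ) : 0 ≤ PowerSeries.coeff (R := ℚ) j (Gm m) := by
  rw [Gm, coeff_mk]
  split
  · exact Finset.sum_nonneg fun d _ => by positivity
  · exact le_refl 0


/-- the coefficients of `F_m(q) = (∑_{n≥1} σ_1(n) q^{mn})/(q;q)_∞` are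
nonnegative and monotonically increasing (for `n ≥ m`). -/
theorem Fm_coefficients_monotone (m : ℕ) (hm : 1 ≤ m) :
    (∀ n : ℕ, 0 ≤ PowerSeries.coeff (R := ℚ) n (Gm m * (eulerProd 1 1)⁻¹)) ∧
    (∀ n : ℕ, m ≤ n →
      PowerSeries.coeff (R := ℚ) n (Gm m * (eulerProd 1 1)⁻¹)
        ≤ PowerSeries.coeff (R := ℚ) (n + 1) (Gm m * (eulerProd 1 1)⁻¹)) := by

  constructor
  · intro n
    rw [PowerSeries.coeff_mul]
    exact Finset.sum_nonneg fun x _ =>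
      mul_nonneg (coeff_Gm_nonneg m x.1) (coeff_Einv_nonneg x.2)
  · intro n _
    have key : 0 ≤ PowerSeries.coeff (R := ℚ) (n + 1)
        (Gm m * ((1 - PowerSeries.X) * (eulerProd 1 1)⁻¹)) := by
      rw [PowerSeries.coeff_mul]
      exact Finset.sum_nonneg fun x _ =>
        mul_nonneg (coeff_Gm_nonneg m x.1) (coeff_one_sub_X_mul_Einv_nonneg x.2)
    have hre : Gm m * ((1 - PowerSeries.X) * (eulerProd 1 1)⁻¹)
        = Gm m * (eulerProd 1 1)⁻¹ - PowerSeries.X * (Gm m * (eulerProd 1 1)⁻¹) := by ring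
    rw [hre, map_sub, PowerSeries.coeff_succ_X_mul] at key
    linarith
end
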